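/- arXiv:1505.06291 — 2 statements merged into one kernel-verified Lean document; each statement's English description precedes it below -/
import Mathlib

section
/- Let f be a transcendental entire function with Baker omitted value ∞. Then for every unbounded curve γ in ℂ, the image f(γ) is unbounded. -/
open Complex Metric Bornology Topology Filter Set OnePoint

/-- `z₀` is a pole of `f` : `f → ∞` near `z₀`. -/
def IsPole (f : ℂ → ℂ) (z₀ : ℂ) : Prop :=
  Tendsto f (𝓝[≠] z₀) (Bornology.cobounded ℂ)

/-- `f` is a transcendental meromorphic function on `ℂ`
(meromorphic everywhere and not a rational function). -/
def TranscMero (f : ℂ → ℂ) : Prop :=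
  MeromorphicOn f Set.univ ∧
    ¬ ∃ p q : Polynomial ℂ, q ≠ 0 ∧ ∀ z, f z * q.eval z = p.eval z

/-- `f` is a transcendental entire function. -/
def TranscEntire (f : ℂ → ℂ) : Prop :=
  Differentiable ℂ f ∧ ¬ ∃ p : Polynomial ℂ, f = fun z => p.eval z

/-- Preimage under the meromorphic function `f` of the ball `D_r(a)`
(poles, where the `ℂ`-valued representative carries a junk value, are excluded). -/
def preimBall (f : ℂ → ℂ) (a : ℂ) (r : ℝ) : Set ℂ :=
  {z | ¬ IsPole f z ∧ f z ∈ Metric.ball a r}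

/-- Every connected component of `S` is a bounded subset of `ℂ`. -/
def BoundedComponents (S : Set ℂ) : Prop :=
  ∀ z ∈ S, Bornology.IsBounded (connectedComponentIn S z)

/-- `S ⊆ ℂ` is infinitely connected: its complement has infinitely many
connected components. -/
def InfConnected (S : Set ℂ) : Prop :=
  {C : Set ℂ | ∃ z ∈ Sᶜ, C = connectedComponentIn Sᶜ z}.Infinite

/-- `a ∈ ℂ` is a Baker omitted value of the meromorphic function `f`:
`a` is omitted and, for all sufficiently small `r > 0`, every component of the
boundary of `f⁻¹(D_r(a))` is bounded. -/
def BakerOmittedValue (f : ℂ → ℂ) (a : ℂ) : Prop :=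
  (∀ z, ¬ IsPole f z → f z ≠ a) ∧
    ∃ r₀ > 0, ∀ r, 0 < r → r < r₀ →
      BoundedComponents (frontier (preimBall f a r))

/-- `∞` is a Baker omitted value of the entire function `f`: for every large
enough `R`, every component of the boundary of `f⁻¹({|w| > R})` is bounded. -/
def BakerOmittedValueInf (f : ℂ → ℂ) : Prop :=
  ∃ R₀ > 0, ∀ R, R₀ < R → BoundedComponents (frontier {z | R < ‖f z‖})

/-- Baker omitted value at a point of the Riemann sphere `ℂ ∪ {∞}`. -/
def BakerOmittedValueSph (f : ℂ → ℂ) (v : OnePoint ℂ) : Prop :=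
  (v = ∞ ∧ (∀ z, ¬ IsPole f z) ∧ BakerOmittedValueInf f) ∨
    (∃ a : ℂ, v = ↑a ∧ BakerOmittedValue f a)

/-- `b ∈ ℂ` is a (finite) asymptotic value of `f`. -/
def AsympValue (f : ℂ → ℂ) (b : ℂ) : Prop :=
  ∃ γ : ℝ → ℂ, ContinuousOn γ (Set.Ici 0) ∧
    Tendsto γ atTop (Bornology.cobounded ℂ) ∧
    Tendsto (fun t => f (γ t)) atTop (𝓝 b)

/-- `∞` is an asymptotic value of `f`. -/
def AsympValueInf (f : ℂ → ℂ) : Prop :=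
  ∃ γ : ℝ → ℂ, ContinuousOn γ (Set.Ici 0) ∧
    Tendsto γ atTop (Bornology.cobounded ℂ) ∧
    Tendsto (fun t => f (γ t)) atTop (Bornology.cobounded ℂ)

/-- uniform divergence to `∞` of a sequence of functions on `K`. -/
def UnifDiverges (F : ℕ → ℂ → ℂ) (K : Set ℂ) : Prop :=
  ∀ M : ℝ, ∀ᶠ n in atTop, ∀ z ∈ K, M < ‖F n z‖

/-- The iterates of `f` form a normal family on `U`: every subsequence has a
further subsequence converging locally uniformly on `U`, either to a finite
limit function or to `∞`. -/
def NormalOn (f : ℂ → ℂ) (U : Set ℂ) : Prop :=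
  ∀ s : ℕ → ℕ, StrictMono s → ∃ t : ℕ → ℕ, StrictMono t ∧
    ((∃ g : ℂ → ℂ, TendstoLocallyUniformlyOn (fun n => f^[s (t n)]) g atTop U) ∨
      (∀ K ⊆ U, IsCompact K → UnifDiverges (fun n => f^[s (t n)]) K))

/-- The Fatou set of `f`. -/
def FatouSet (f : ℂ → ℂ) : Set ℂ :=
  {z | ∃ U : Set ℂ, IsOpen U ∧ z ∈ U ∧ NormalOn f U}

/-- `U` is a Fatou component of `f`. -/
def IsFatouComponent (f : ℂ → ℂ) (U : Set ℂ) : Prop :=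
  ∃ z ∈ FatouSet f, U = connectedComponentIn (FatouSet f) z

/-- `U` surrounds `0`: `0` lies in a bounded complementary component of `U`. -/
def SurroundsZero (U : Set ℂ) : Prop :=
  0 ∉ U ∧ Bornology.IsBounded (connectedComponentIn Uᶜ 0)

/-- `U` is multiply connected: its complement has a bounded component. -/
def MultiplyConnected (U : Set ℂ) : Prop :=
  ∃ w ∉ U, Bornology.IsBounded (connectedComponentIn Uᶜ w)

/-- `U` is a Baker wandering domain of `f`. -/
def IsBakerWanderingDomain (f : ℂ → ℂ) (U : Set ℂ) : Prop :=
  ∃ z₀ ∈ FatouSet f, U = connectedComponentIn (FatouSet f) z₀ ∧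
    (∀ m n : ℕ, m ≠ n →
      connectedComponentIn (FatouSet f) (f^[m] z₀) ≠
        connectedComponentIn (FatouSet f) (f^[n] z₀)) ∧
    (∃ N : ℕ, ∀ n ≥ N,
      Bornology.IsBounded (connectedComponentIn (FatouSet f) (f^[n] z₀)) ∧
      MultiplyConnected (connectedComponentIn (FatouSet f) (f^[n] z₀)) ∧
      SurroundsZero (connectedComponentIn (FatouSet f) (f^[n] z₀))) ∧
    (∀ z ∈ U, Tendsto (fun n => f^[n] z) atTop (Bornology.cobounded ℂ))

/-- `U` is a completely invariant set for `f`. -/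
def CompletelyInvariant (f : ℂ → ℂ) (U : Set ℂ) : Prop :=
  f '' U ⊆ U ∧ f ⁻¹' U ⊆ U

lemma aux_ratio_slit {z x y : ℂ} (h : z ∉ segment ℝ x y) :
    (z - x) / (z - y) ∈ Complex.slitPlane := by
  by_contra hns
  have hzy : z ≠ y := fun h' => h (h' ▸ right_mem_segment ℝ x y)
  have hzy' : z - y ≠ 0 := sub_ne_zero.2 hzy
  rw [Complex.mem_slitPlane_iff] at hns
  push_neg at hns
  obtain ⟨h1, h2⟩ := hns
  set w : ℂ := (z - x) / (z - y) with hw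
  have hwr : w = ((w.re : ℝ) : ℂ) := by
    apply Complex.ext
    · simp
    · simpa using h2
  set r : ℝ := w.re with hr
  have key : z - x = (r : ℂ) * (z - y) := by
    rw [← hwr, hw]; field_simp
  have h1r : (0:ℝ) < 1 - r := by linarith
  have hcoef : ((1:ℂ) - (r:ℂ)) * z = x + (-(r:ℂ)) * y := by
    linear_combination key
  apply h
  refine ⟨1 / (1 - r), -r / (1 - r), by positivity,
    div_nonneg (by linarith) (by linarith), by field_simp; ring, ?_⟩
  have hne : ((1:ℂ) - (r:ℂ)) ≠ 0 := by
    have : ((1 - r : ℝ) : ℂ) ≠ 0 := Complex.ofReal_ne_zero.2 h1r.ne'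
    simpa using this
  rw [Complex.real_smul, Complex.real_smul]
  push_cast
  field_simp
  linear_combination -hcoef

/-- near-1 complex numbers lie in the slit plane -/
lemma aux_ball_slit {w : ℂ} (h : ‖w - 1‖ < 1) : w ∈ Complex.slitPlane := by
  rw [Complex.mem_slitPlane_iff]
  left
  have h1 : |w.re - 1| ≤ ‖w - 1‖ := by
    have := Complex.abs_re_le_norm (w - 1)
    simpa using this
  have := abs_lt.1 (lt_of_le_of_lt h1 h)
  linarith [this.1]

/-- ratio of two close nonvanishing values is in the slit plane -/
lemma aux_ratio_near {u v : ℂ} (hv : v ≠ 0) (h : ‖u - v‖ < ‖v‖) :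
    u / v ∈ Complex.slitPlane ∧ u ≠ 0 := by
  have hvn : (0:ℝ) < ‖v‖ := norm_pos_iff.2 hv
  have hu : u ≠ 0 := by
    intro rfl0
    rw [rfl0] at h
    simp at h
  refine ⟨aux_ball_slit ?_, hu⟩
  have : u / v - 1 = (u - v) / v := by field_simp
  rw [this, norm_div]
  rw [div_lt_one hvn]
  exact h

/-- a continuous function on `[0,1]` whose exponential is constantly `1` has `φ 1 = φ 0`. -/
lemma aux_exp_one_const {φ : ℝ → ℂ} (hc : ContinuousOn φ (Icc 0 1))
    (h : ∀ s ∈ Icc (0:ℝ) 1, Complex.exp (φ s) = 1) : φ 1 = φ 0 := by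
  have hmem : ∀ s ∈ Icc (0:ℝ) 1, ∃ k : ℤ, φ s = k * (2 * Real.pi * Complex.I) := by
    intro s hs
    exact Complex.exp_eq_one_iff.mp (h s hs)
  -- the imaginary part over 2π is an integer
  have hψc : ContinuousOn (fun s => (φ s).im / (2 * Real.pi)) (Icc 0 1) :=
    (Complex.continuous_im.comp_continuousOn hc).div_const _
  obtain ⟨k0, hk0⟩ := hmem 0 (by constructor <;> norm_num)
  obtain ⟨k1, hk1⟩ := hmem 1 (by constructor <;> norm_num)
  have him : ∀ (k : ℤ), ((k:ℂ) * (2 * Real.pi * Complex.I)).im = k * (2 * Real.pi) := by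
    intro k; simp
  have hpi : (0:ℝ) < 2 * Real.pi := by positivity
  have hψ0 : (φ 0).im / (2 * Real.pi) = k0 := by
    rw [hk0, him, mul_div_cancel_right₀]; exact hpi.ne'
  have hψ1 : (φ 1).im / (2 * Real.pi) = k1 := by
    rw [hk1, him, mul_div_cancel_right₀]; exact hpi.ne'
  -- suffices k0 = k1
  suffices hk : k0 = k1 by
    rw [hk0, hk1, hk]
  by_contra hne
  -- IVT
  have hiv := intermediate_value_uIcc (a := (0:ℝ)) (b := 1)
      (f := fun s => (φ s).im / (2 * Real.pi)) (by rwa [uIcc_of_le zero_le_one])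
  have hlt : ∃ c : ℝ, c ∈ uIcc ((k0:ℝ)) ((k1:ℝ)) ∧ ∀ k : ℤ, (k:ℝ) ≠ c := by
    rcases lt_or_gt_of_ne (fun hh : (k0:ℝ) = (k1:ℝ) => hne (by exact_mod_cast hh)) with hlt | hlt
    · refine ⟨k0 + 1/2, ?_, ?_⟩
      · rw [uIcc_of_le hlt.le]
        constructor
        · linarith
        · have : (k0:ℝ) + 1 ≤ k1 := by exact_mod_cast hlt
          linarith
      · intro k hk
        have h1 : (k0:ℝ) < k := by rw [hk]; linarith
        have h2 : (k:ℝ) < k0 + 1 := by rw [hk]; linarith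
        have h1' : k0 < k := by exact_mod_cast h1
        have h2' : k < k0 + 1 := by exact_mod_cast h2
        omega
    · refine ⟨k1 + 1/2, ?_, ?_⟩
      · rw [uIcc_of_ge hlt.le]
        constructor
        · linarith
        · have : (k1:ℝ) + 1 ≤ k0 := by exact_mod_cast hlt
          linarith
      · intro k hk
        have h1 : (k1:ℝ) < k := by rw [hk]; linarith
        have h2 : (k:ℝ) < k1 + 1 := by rw [hk]; linarith
        have h1' : k1 < k := by exact_mod_cast h1
        have h2' : k < k1 + 1 := by exact_mod_cast h2
        omega
  obtain ⟨c, hc1, hc2⟩ := hlt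
  have hc1' : c ∈ uIcc ((fun s => (φ s).im / (2 * Real.pi)) 0) ((fun s => (φ s).im / (2 * Real.pi)) 1) := by
    simpa [hψ0, hψ1] using hc1
  obtain ⟨s, hs, hsc⟩ := hiv hc1'
  have hs' : s ∈ Icc (0:ℝ) 1 := by rwa [uIcc_of_le zero_le_one] at hs
  obtain ⟨k, hk⟩ := hmem s hs'
  apply hc2 k
  rw [← hsc]
  simp only
  rw [hk, him, mul_div_cancel_right₀]
  exact hpi.ne'

lemma aux_telescope (w : ℂ) (c : ℕ → ℂ) (n : ℕ) (h : ∀ j ≤ n, w - c j ≠ 0) :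
    (∏ j ∈ Finset.range n, (w - c j) / (w - c (j+1))) = (w - c 0) / (w - c n) := by
  induction n with
  | zero =>
    rw [Finset.prod_range_zero, eq_comm, div_self (h 0 le_rfl)]
  | succ n ih =>
    rw [Finset.prod_range_succ, ih (fun j hj => h j (hj.trans (Nat.le_succ n)))]
    have h0 := h 0 (Nat.zero_le _)
    have hn := h n (Nat.le_succ n)
    have hn1 := h (n+1) le_rfl
    field_simp

open scoped Classical in
lemma aux_glue {A B : Set ℂ} {θ₁ θ₂ : ℂ → ℂ} (hA : IsClosed A) (hB : IsClosed B)
    (h1 : ContinuousOn θ₁ A) (h2 : ContinuousOn θ₂ B) (hag : ∀ z ∈ A ∩ B, θ₁ z = θ₂ z) :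
    ContinuousOn (fun z => if z ∈ A then θ₁ z else θ₂ z) (A ∪ B) := by
  set θ : ℂ → ℂ := fun z => if z ∈ A then θ₁ z else θ₂ z with hθ
  have hθA : ∀ z ∈ A, θ z = θ₁ z := fun z hz => by simp [hθ, hz]
  have hθB : ∀ z ∈ B, θ z = θ₂ z := by
    intro z hz
    by_cases hzA : z ∈ A
    · simp [hθ, hzA, hag z ⟨hzA, hz⟩]
    · simp [hθ, hzA]
  intro z hz
  have hCA : ContinuousWithinAt θ A z := by
    by_cases hzA : z ∈ A
    · exact ((h1 z hzA).congr hθA (hθA z hzA))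
    · exact continuousWithinAt_of_notMem_closure (by rwa [hA.closure_eq])
  have hCB : ContinuousWithinAt θ B z := by
    by_cases hzB : z ∈ B
    · exact ((h2 z hzB).congr hθB (hθB z hzB))
    · exact continuousWithinAt_of_notMem_closure (by rwa [hB.closure_eq])
  exact hCA.union hCB

lemma aux_frontier_cc {S : Set ℂ} (hS : IsOpen S) (x : ℂ) :
    frontier (connectedComponentIn S x) ⊆ frontier S := by
  by_cases hxS : x ∈ S
  · intro w hw
    set V := connectedComponentIn S x with hV
    have hVopen : IsOpen V := hS.connectedComponentIn
    have hwc : w ∈ closure V := hw.1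
    have hwnV : w ∉ V := by
      intro hwV
      exact hw.2 (by rwa [hVopen.interior_eq])
    constructor
    · exact closure_mono (connectedComponentIn_subset S x) hwc
    · rw [hS.interior_eq]
      intro hwS
      apply hwnV
      have hVconn : IsPreconnected V := isPreconnected_connectedComponentIn
      have hins : IsPreconnected (insert w V) := by
        apply hVconn.subset_closure (subset_insert w V)
        intro u hu
        rcases hu with rfl | hu
        · exact hwc
        · exact subset_closure hu
      have hsub : insert w V ⊆ connectedComponentIn S w := by
        apply hins.subset_connectedComponentIn (mem_insert w V)
        intro u hu
        rcases hu with rfl | hu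
        · exact hwS
        · exact connectedComponentIn_subset S x hu
      have hxmem : x ∈ connectedComponentIn S w :=
        hsub (mem_insert_of_mem _ (mem_connectedComponentIn hxS))
      have := connectedComponentIn_eq hxmem
      rw [← hV] at this
      rw [← this]
      exact hsub (mem_insert w V)
  · rw [connectedComponentIn_eq_empty hxS]
    simp

/-- components of `{R < ‖f‖}` for entire `f` are unbounded (max modulus) -/
lemma aux_cc_unbounded {f : ℂ → ℂ} (hd : Differentiable ℂ f) {R : ℝ} {a : ℂ}
    (ha : R < ‖f a‖) :
    ¬ Bornology.IsBounded (connectedComponentIn {z : ℂ | R < ‖f z‖} a) := by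
  intro hb
  set S : Set ℂ := {z : ℂ | R < ‖f z‖} with hSdef
  have hSopen : IsOpen S := isOpen_lt continuous_const (hd.continuous.norm)
  set V := connectedComponentIn S a with hV
  have haV : a ∈ V := mem_connectedComponentIn ha
  have hfr : ∀ w ∈ frontier V, ‖f w‖ ≤ R := by
    intro w hw
    have hwS : w ∈ frontier S := aux_frontier_cc hSopen a hw
    have : w ∉ S := by
      rw [hSopen.frontier_eq] at hwS
      exact hwS.2
    simpa [hSdef] using this
  have := Complex.norm_le_of_forall_mem_frontier_norm_le hb (hd.diffContOnCl) hfr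
      (subset_closure haV)
  linarith

/-- Šura-Bura: a point of a closed set with bounded component has a compact
relatively open neighborhood in the set. -/
lemma aux_pt_clopen {F : Set ℂ} (hF : IsClosed F) {z : ℂ} (hz : z ∈ F)
    (hb : Bornology.IsBounded (connectedComponentIn F z)) :
    ∃ O : Set ℂ, IsOpen O ∧ z ∈ O ∧ IsCompact (F ∩ O) := by
  obtain ⟨M, hM⟩ := isBounded_iff_forall_norm_le.mp hb
  set ρ : ℝ := M + ‖z‖ + 1 with hρdef
  have hρz : ‖z‖ < ρ := by
    have : (0:ℝ) ≤ M := le_trans (norm_nonneg _) (hM z (mem_connectedComponentIn hz))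
    simp only [hρdef]; linarith
  have hCρ : connectedComponentIn F z ⊆ ball 0 ρ := by
    intro w hw
    rw [mem_ball_zero_iff]
    have : (0:ℝ) ≤ ‖z‖ := norm_nonneg _
    have := hM w hw
    simp only [hρdef]; linarith
  set F' : Set ℂ := F ∩ closedBall 0 (ρ + 1) with hF'def
  have hF'closed : IsClosed F' := hF.inter isClosed_closedBall
  have hF'cpt : IsCompact F' := by
    apply (isCompact_closedBall (0:ℂ) (ρ+1)).of_isClosed_subset hF'closed inter_subset_right
  have hzF' : z ∈ F' := ⟨hz, by
    rw [mem_closedBall_zero_iff]; linarith⟩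
  -- the component in F' equals the component in F
  have hCC : connectedComponentIn F' z = connectedComponentIn F z := by
    apply Subset.antisymm
    · exact (isPreconnected_connectedComponentIn).subset_connectedComponentIn
        (mem_connectedComponentIn hzF')
        ((connectedComponentIn_subset F' z).trans inter_subset_left)
    · apply (isPreconnected_connectedComponentIn).subset_connectedComponentIn
        (mem_connectedComponentIn hz)
      intro w hw
      exact ⟨connectedComponentIn_subset F z hw, by
        rw [mem_closedBall_zero_iff]
        have := mem_ball_zero_iff.mp (hCρ hw)
        linarith⟩
  haveI : CompactSpace F' := isCompact_iff_compactSpace.mp hF'cpt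
  set x : F' := ⟨z, hzF'⟩ with hxdef
  have hiter := connectedComponent_eq_iInter_isClopen x
  set A : Set F' := {w : F' | ρ ≤ ‖(w : ℂ)‖} with hAdef
  have hAclosed : IsClosed A := by
    apply IsClosed.preimage (continuous_subtype_val.norm)  (isClosed_Ici (a := ρ))
  have hAcpt : IsCompact A := hAclosed.isCompact
  have hdisj : A ∩ connectedComponent x = ∅ := by
    rw [eq_empty_iff_forall_notMem]
    rintro w ⟨hwA, hwC⟩
    have hwmem : (w : ℂ) ∈ connectedComponentIn F' z := by
      rw [connectedComponentIn_eq_image hzF']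
      exact ⟨w, hwC, rfl⟩
    rw [hCC] at hwmem
    have := mem_ball_zero_iff.mp (hCρ hwmem)
    exact absurd hwA (by simp only [hAdef, mem_setOf_eq]; push_neg; exact this)
  obtain ⟨t, ht⟩ := hAcpt.elim_finite_subfamily_closed
      (fun s : {s : Set F' // IsClopen s ∧ x ∈ s} => (s : Set F'))
      (fun s => s.2.1.isClosed) (by rw [← hiter]; exact hdisj)
  set Z : Set F' := ⋂ i ∈ t, (i : Set F') with hZdef
  have hZclopen : IsClopen Z := isClopen_biInter_finset (fun i _ => i.2.1)
  have hxZ : x ∈ Z := by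
    rw [hZdef]
    exact mem_biInter (fun i _ => i.2.2)
  have hZA : Z ∩ A = ∅ := by
    rw [eq_empty_iff_forall_notMem]
    rintro w ⟨hwZ, hwA⟩
    rw [eq_empty_iff_forall_notMem] at ht
    exact ht w ⟨hwA, by rw [hZdef] at hwZ; exact mem_iInter₂.mpr fun i hi => mem_iInter₂.mp hwZ i hi⟩
  -- extract an open set of ℂ
  obtain ⟨O', hO'open, hO'⟩ := isOpen_induced_iff.mp hZclopen.2
  refine ⟨O' ∩ ball 0 ρ, hO'open.inter isOpen_ball, ?_, ?_⟩
  · constructor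
    · have : x ∈ Subtype.val ⁻¹' O' := by rw [hO']; exact hxZ
      exact this
    · rw [mem_ball_zero_iff]; exact hρz
  · have hkey : F ∩ (O' ∩ ball 0 ρ) = Subtype.val '' Z := by
      apply Subset.antisymm
      · rintro w ⟨hwF, hwO', hwball⟩
        have hwF' : w ∈ F' := ⟨hwF, by
          rw [mem_closedBall_zero_iff]
          have := mem_ball_zero_iff.mp hwball
          linarith⟩
        refine ⟨⟨w, hwF'⟩, ?_, rfl⟩
        rw [← hO']
        exact hwO'
      · rintro w ⟨v, hvZ, rfl⟩
        have hvO' : (v : ℂ) ∈ O' := by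
          have : v ∈ Subtype.val ⁻¹' O' := by rw [hO']; exact hvZ
          exact this
        have hvball : (v : ℂ) ∈ ball 0 ρ := by
          rw [mem_ball_zero_iff]
          by_contra hge
          push_neg at hge
          have hvA : v ∈ A := by simp only [hAdef, mem_setOf_eq]; exact hge
          rw [eq_empty_iff_forall_notMem] at hZA
          exact hZA v ⟨hvZ, hvA⟩
        exact ⟨v.2.1, hvO', hvball⟩
    rw [hkey]
    exact (hZclopen.isClosed.isCompact).image continuous_subtype_val

/-- splitting of a closed set with all components bounded -/
lemma aux_split {F : Set ℂ} (hF : IsClosed F)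
    (hbc : ∀ z ∈ F, Bornology.IsBounded (connectedComponentIn F z)) (ρ : ℝ) :
    ∃ Fb Fu : Set ℂ, Fb ∪ Fu = F ∧ Disjoint Fb Fu ∧ IsCompact Fb ∧ IsClosed Fu ∧
      (∀ z ∈ Fu, ρ < ‖z‖) ∧ (∀ z ∈ Fb, z ∈ F) := by
  classical
  set K : Set ℂ := F ∩ closedBall 0 ρ with hKdef
  have hKcpt : IsCompact K :=
    (isCompact_closedBall (0:ℂ) ρ).of_isClosed_subset (hF.inter isClosed_closedBall)
      inter_subset_right
  have hchoice : ∀ z : K, ∃ O : Set ℂ, IsOpen O ∧ (z : ℂ) ∈ O ∧ IsCompact (F ∩ O) := by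
    rintro ⟨z, hzF, _⟩
    exact aux_pt_clopen hF hzF (hbc z hzF)
  choose O hOopen hzO hOcpt using hchoice
  obtain ⟨t, ht⟩ := hKcpt.elim_finite_subcover O hOopen
    (fun w hw => mem_iUnion.mpr ⟨⟨w, hw⟩, hzO ⟨w, hw⟩⟩)
  set U : Set ℂ := ⋃ i ∈ t, O i with hUdef
  have hUopen : IsOpen U := isOpen_biUnion (fun i _ => hOopen i)
  refine ⟨F ∩ U, F \ U, ?_, ?_, ?_, ?_, ?_, fun z hz => hz.1⟩
  · exact inter_union_diff F U
  · exact disjoint_sdiff_self_right.mono_left inter_subset_right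
  · have : F ∩ U = ⋃ i ∈ t, (F ∩ O i) := by
      rw [hUdef, inter_iUnion₂]
    rw [this]
    exact t.finite_toSet.isCompact_biUnion (fun i _ => hOcpt i)
  · exact hF.sdiff hUopen
  · intro z hz
    by_contra hle
    push_neg at hle
    have : z ∈ K := ⟨hz.1, mem_closedBall_zero_iff.mpr hle⟩
    exact hz.2 (ht this)


/-- a chain log: if `a` and `b` are joined in the complement of the compact `Fb`,
then `(z-a)/(z-b)` admits a continuous logarithm on `Fb`. -/
lemma aux_chain_log {Fb : Set ℂ} (hFb : IsCompact Fb) {a b : ℂ}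
    (hab : JoinedIn Fbᶜ a b) :
    ∃ θ : ℂ → ℂ, ContinuousOn θ Fb ∧ ∀ z ∈ Fb, Complex.exp (θ z) = (z - a) / (z - b) := by
  rcases Fb.eq_empty_or_nonempty with rfl | hne
  · exact ⟨fun _ => 0, continuousOn_empty _, fun z hz => absurd hz (notMem_empty z)⟩
  obtain ⟨p, hp⟩ := hab
  set q : ℝ → ℂ := ⇑p.extend with hq
  have hqc : Continuous q := p.continuous_extend
  have hqmem : ∀ t ∈ Icc (0:ℝ) 1, q t ∈ Fbᶜ := by
    intro t ht
    rw [hq, p.extend_apply ht]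
    exact hp _
  -- minimal distance from the path to Fb
  set K' : Set ℂ := q '' Icc 0 1 with hK'
  have hK'cpt : IsCompact K' := (isCompact_Icc).image hqc
  have hK'ne : K'.Nonempty := ⟨q 0, ⟨0, by constructor <;> norm_num, rfl⟩⟩
  obtain ⟨x₀, hx₀K, hx₀min⟩ := hK'cpt.exists_isMinOn hK'ne
    ((continuous_infDist_pt Fb).continuousOn)
  set m : ℝ := Metric.infDist x₀ Fb with hm
  have hmpos : 0 < m := by
    rw [hm]
    rcases hx₀K with ⟨t, ht, rfl⟩
    exact (hFb.isClosed.notMem_iff_infDist_pos hne).mp (hqmem t ht)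
  have hminf : ∀ t ∈ Icc (0:ℝ) 1, m ≤ Metric.infDist (q t) Fb := by
    intro t ht
    exact hx₀min ⟨t, ht, rfl⟩
  -- uniform continuity
  have huc := (isCompact_Icc (a := (0:ℝ)) (b := 1)).uniformContinuousOn_of_continuous
    hqc.continuousOn
  rw [Metric.uniformContinuousOn_iff] at huc
  obtain ⟨δ, hδpos, hδ⟩ := huc m hmpos
  obtain ⟨n, hnpos, hstep⟩ : ∃ n : ℕ, 0 < (n:ℝ) ∧ (1:ℝ)/n < δ := by
    obtain ⟨n', hn'⟩ := exists_nat_one_div_lt hδpos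
    exact ⟨n'+1, by positivity, by exact_mod_cast hn'⟩
  set c : ℕ → ℂ := fun j => q ((j:ℝ)/n) with hc
  have hjmem : ∀ j : ℕ, j ≤ n → ((j:ℝ)/n) ∈ Icc (0:ℝ) 1 := by
    intro j hj
    constructor
    · positivity
    · rw [div_le_one hnpos]; exact_mod_cast hj
  have hcnotin : ∀ j ≤ n, c j ∈ Fbᶜ := fun j hj => hqmem _ (hjmem j hj)
  have hclose : ∀ j < n, dist (c (j+1)) (c j) < m := by
    intro j hj
    apply hδ _ (hjmem _ hj) _ (hjmem _ (le_of_lt hj))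
    rw [Real.dist_eq]
    have harg : ((j:ℝ)+1)/n - (j:ℝ)/n = 1/n := by field_simp; ring
    push_cast
    rw [harg, _root_.abs_of_pos (by positivity)]
    exact hstep
  have hseg : ∀ j < n, ∀ z ∈ Fb, z ∉ segment ℝ (c j) (c (j+1)) := by
    intro j hj z hzF hzseg
    obtain ⟨α, β, hα, hβ, hαβ, habz⟩ := hzseg
    have hdist : dist z (c j) < m := by
      have : z - c j = β • (c (j+1) - c j) := by
        have : α • c j + β • c (j+1) = z := habz
        rw [← this]
        rw [smul_sub]
        have hα1 : α = 1 - β := by linarith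
        rw [hα1]
        module
      rw [dist_eq_norm, this, norm_smul]
      calc ‖β‖ * ‖c (j+1) - c j‖ ≤ 1 * ‖c (j+1) - c j‖ := by
            apply mul_le_mul_of_nonneg_right _ (norm_nonneg _)
            rw [Real.norm_eq_abs, _root_.abs_of_nonneg hβ]; linarith
        _ = ‖c (j+1) - c j‖ := one_mul _
        _ < m := by rw [← dist_eq_norm]; exact hclose j hj
    have : m ≤ dist (c j) z := le_trans (hminf _ (hjmem j hj.le)) (Metric.infDist_le_dist_of_mem hzF)
    rw [dist_comm] at this
    linarith
  refine ⟨fun z => ∑ j ∈ Finset.range n, Complex.log ((z - c j) / (z - c (j+1))), ?_, ?_⟩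
  · apply continuousOn_finset_sum
    intro j hj z hz
    rw [Finset.mem_range] at hj
    have hslit : (z - c j) / (z - c (j+1)) ∈ Complex.slitPlane :=
      aux_ratio_slit (hseg j hj z hz)
    have hratio : ContinuousWithinAt (fun a : ℂ => (a - c j) / (a - c (j+1))) Fb z := by
      apply ContinuousWithinAt.div
      · exact (continuous_id.sub continuous_const).continuousWithinAt
      · exact (continuous_id.sub continuous_const).continuousWithinAt
      · rw [sub_ne_zero]
        intro hzc
        exact (hcnotin (j+1) hj) (hzc ▸ hz)
    exact hratio.clog hslit
  · intro z hz
    rw [Complex.exp_sum]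
    have hzne : ∀ j ≤ n, z - c j ≠ 0 := by
      intro j hj
      rw [sub_ne_zero]
      intro hzc
      exact (hcnotin j hj) (hzc ▸ hz)
    have : ∀ j ∈ Finset.range n,
        Complex.exp (Complex.log ((z - c j) / (z - c (j+1)))) = (z - c j) / (z - c (j+1)) := by
      intro j hj
      rw [Finset.mem_range] at hj
      exact Complex.exp_log (div_ne_zero (hzne j hj.le) (hzne (j+1) hj))
    rw [Finset.prod_congr rfl this, aux_telescope z c n hzne]
    have hc0 : c 0 = a := by
      show q (((0:ℕ):ℝ)/(n:ℝ)) = a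
      norm_num
      exact p.extend_zero
    have hcn : c n = b := by
      have h1 : ((n:ℝ))/n = 1 := div_self hnpos.ne'
      show q ((n:ℝ)/n) = b
      rw [h1]
      exact p.extend_one
    rw [hc0, hcn]

lemma aux_min_lip (a x y : ℝ) : |min a x - min a y| ≤ |x - y| := by
  rw [abs_sub_le_iff]
  constructor
  · rcases min_cases a y with ⟨h2, _⟩ | ⟨h2, _⟩
    · rw [h2]; have := min_le_left a x; linarith [abs_nonneg (x - y)]
    · rw [h2]; have := min_le_right a x; linarith [le_abs_self (x - y)]
  · rcases min_cases a x with ⟨h2, _⟩ | ⟨h2, _⟩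
    · rw [h2]; have := min_le_left a y; linarith [abs_nonneg (x - y)]
    · rw [h2]; have := min_le_right a y; linarith [neg_abs_le (x - y)]

lemma aux_telescope2 (g : ℕ → ℂ) (n : ℕ) (h : ∀ j ≤ n, g j ≠ 0) :
    (∏ j ∈ Finset.range n, g (j+1) / g j) = g n / g 0 := by
  induction n with
  | zero => rw [Finset.prod_range_zero, eq_comm, div_self (h 0 le_rfl)]
  | succ n ih =>
    rw [Finset.prod_range_succ, ih (fun j hj => h j (hj.trans (Nat.le_succ n)))]
    have h0 := h 0 (Nat.zero_le _)
    have hn := h n (Nat.le_succ n)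
    have hn1 := h (n+1) le_rfl
    field_simp

/-- The key homotopy-invariance-of-winding contradiction. -/
lemma aux_winding {H : ℝ × ℝ → ℂ} (hH : Continuous H)
    (hne : ∀ p : ℝ × ℝ, p.1 ∈ Icc (0:ℝ) 1 → p.2 ∈ Icc (0:ℝ) 1 → H p ≠ 0)
    (hper : ∀ s ∈ Icc (0:ℝ) 1, H (s, 1) = H (s, 0))
    (htop : ∀ t ∈ Icc (0:ℝ) 1, H (1, t) = 1)
    {lam : ℝ → ℂ} (hlamc : ContinuousOn lam (Icc 0 1))
    (hlam : ∀ t ∈ Icc (0:ℝ) 1, Complex.exp (lam t) = H (0, t))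
    (hjump : lam 1 - lam 0 = 2 * Real.pi * Complex.I) : False := by
  have h01 : (0:ℝ) ∈ Icc (0:ℝ) 1 := by constructor <;> norm_num
  have h11 : (1:ℝ) ∈ Icc (0:ℝ) 1 := by constructor <;> norm_num
  set K : Set (ℝ × ℝ) := Icc 0 1 ×ˢ Icc 0 1 with hK
  have hKcpt : IsCompact K := isCompact_Icc.prod isCompact_Icc
  have hKne : K.Nonempty := ⟨(0,0), ⟨h01, h01⟩⟩
  obtain ⟨p₀, hp₀K, hp₀min⟩ := hKcpt.exists_isMinOn hKne (hH.norm.continuousOn)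
  set m : ℝ := ‖H p₀‖ with hm
  have hmpos : 0 < m := norm_pos_iff.2 (hne p₀ hp₀K.1 hp₀K.2)
  have hmle : ∀ p, p ∈ K → m ≤ ‖H p‖ := fun p hp => hp₀min hp
  have huc := hKcpt.uniformContinuousOn_of_continuous hH.continuousOn
  rw [Metric.uniformContinuousOn_iff] at huc
  obtain ⟨δ, hδpos, hδ⟩ := huc m hmpos
  obtain ⟨n, hnpos, hstep⟩ : ∃ n : ℕ, 0 < (n:ℝ) ∧ (1:ℝ)/n < δ := by
    obtain ⟨n', hn'⟩ := exists_nat_one_div_lt hδpos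
    exact ⟨n'+1, by positivity, by exact_mod_cast hn'⟩
  have hjn : ∀ j : ℕ, j ≤ n → ((j:ℝ)/n) ∈ Icc (0:ℝ) 1 := by
    intro j hj
    exact ⟨by positivity, by rw [div_le_one hnpos]; exact_mod_cast hj⟩
  -- ratio facts
  have hratio : ∀ s ∈ Icc (0:ℝ) 1, ∀ t ∈ Icc (0:ℝ) 1, ∀ t' ∈ Icc (0:ℝ) 1,
      |t - t'| ≤ 1/n →
      H (s,t) / H (s,t') ∈ Complex.slitPlane ∧ H (s, t') ≠ 0 ∧ H (s,t) ≠ 0 := by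
    intro s hs t ht t' ht' hclose
    have hd : dist ((s,t) : ℝ × ℝ) ((s,t') : ℝ × ℝ) < δ := by
      rw [Prod.dist_eq]
      have : dist s s = 0 := by simp
      rw [this]
      rw [Real.dist_eq]
      have : max 0 |t - t'| = |t - t'| := max_eq_right (abs_nonneg _)
      rw [this]
      exact lt_of_le_of_lt hclose hstep
    have h2 : ‖H (s,t) - H (s,t')‖ < m := by
      rw [← dist_eq_norm]
      exact hδ _ ⟨hs,ht⟩ _ ⟨hs,ht'⟩ hd
    have h3 : m ≤ ‖H (s,t')‖ := hmle _ ⟨hs, ht'⟩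
    have hden : H (s,t') ≠ 0 := hne _ hs ht'
    have hnum : H (s,t) ≠ 0 := hne _ hs ht
    refine ⟨aux_ball_slit ?_, hden, hnum⟩
    have : H (s,t) / H (s,t') - 1 = (H (s,t) - H (s,t')) / H (s,t') := by
      field_simp
    rw [this, norm_div, div_lt_one (lt_of_lt_of_le hmpos h3)]
    exact lt_of_lt_of_le h2 h3
  -- the partial winding sum
  set Wf : ℝ × ℝ → ℂ := fun p => ∑ j ∈ Finset.range n,
      Complex.log (H (p.1, min p.2 (((j:ℝ)+1)/n)) / H (p.1, min p.2 ((j:ℝ)/n))) with hWf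
  have hmin_mem : ∀ t ∈ Icc (0:ℝ) 1, ∀ j : ℕ, j ≤ n → min t ((j:ℝ)/n) ∈ Icc (0:ℝ) 1 := by
    intro t ht j hj
    exact ⟨le_min ht.1 (hjn j hj).1, min_le_of_left_le ht.2⟩
  have hterm : ∀ p ∈ K, ∀ j : ℕ, j < n →
      H (p.1, min p.2 (((j:ℝ)+1)/n)) / H (p.1, min p.2 ((j:ℝ)/n)) ∈ Complex.slitPlane ∧
      H (p.1, min p.2 ((j:ℝ)/n)) ≠ 0 ∧ H (p.1, min p.2 (((j:ℝ)+1)/n)) ≠ 0 := by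
    rintro ⟨s, t⟩ ⟨hs, ht⟩ j hj
    have hj1 : (((j:ℝ)+1)/n) = (((j+1:ℕ)):ℝ)/n := by push_cast; ring
    have hm1 : min t (((j:ℝ)+1)/n) ∈ Icc (0:ℝ) 1 := by
      rw [hj1]; exact hmin_mem t ⟨ht.1, ht.2⟩ (j+1) hj
    have hm2 : min t ((j:ℝ)/n) ∈ Icc (0:ℝ) 1 := hmin_mem t ⟨ht.1, ht.2⟩ j hj.le
    have hdist : |min t (((j:ℝ)+1)/n) - min t ((j:ℝ)/n)| ≤ 1/n := by
      apply le_trans (aux_min_lip t _ _)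
      have : ((j:ℝ)+1)/n - (j:ℝ)/n = 1/n := by field_simp; ring
      rw [this, _root_.abs_of_pos (by positivity)]
    exact hratio s hs _ hm1 _ hm2 hdist
  have hWfc : ContinuousOn Wf K := by
    apply continuousOn_finset_sum
    intro j hj
    rw [Finset.mem_range] at hj
    intro p hp
    have hsl := (hterm p hp j hj).1
    have hden := (hterm p hp j hj).2.1
    have hc1 : ContinuousWithinAt (fun p : ℝ × ℝ => H (p.1, min p.2 (((j:ℝ)+1)/n))) K p := by
      apply Continuous.continuousWithinAt
      exact hH.comp (continuous_fst.prodMk ((continuous_snd.min continuous_const)))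
    have hc2 : ContinuousWithinAt (fun p : ℝ × ℝ => H (p.1, min p.2 ((j:ℝ)/n))) K p := by
      apply Continuous.continuousWithinAt
      exact hH.comp (continuous_fst.prodMk ((continuous_snd.min continuous_const)))
    exact (hc1.div hc2 hden).clog hsl
  have hWfexp : ∀ p ∈ K, Complex.exp (Wf p) = H (p.1, p.2) / H (p.1, 0) := by
    rintro ⟨s, t⟩ ⟨hs, ht⟩
    rw [hWf]
    simp only
    rw [Complex.exp_sum]
    set g : ℕ → ℂ := fun j => H (s, min t ((j:ℝ)/n)) with hg
    have hgne : ∀ j ≤ n, g j ≠ 0 := by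
      intro j hj
      exact hne _ hs (hmin_mem t ht j hj)
    have heq : ∀ j ∈ Finset.range n,
        Complex.exp (Complex.log (H (s, min t (((j:ℝ)+1)/n)) / H (s, min t ((j:ℝ)/n))))
          = g (j+1) / g j := by
      intro j hj
      rw [Finset.mem_range] at hj
      have hj1 : (((j:ℝ)+1)/n) = (((j+1:ℕ)):ℝ)/n := by push_cast; ring
      rw [Complex.exp_log]
      · rw [hg]; simp only; rw [hj1]
      · exact div_ne_zero (by rw [hj1]; exact hgne (j+1) hj)  (hgne j hj.le)
    rw [Finset.prod_congr rfl heq, aux_telescope2 g n hgne]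
    have hgn : g n = H (s, t) := by
      rw [hg]
      simp only
      rw [div_self hnpos.ne', min_eq_left ht.2]
    have hg0 : g 0 = H (s, 0) := by
      rw [hg]
      simp only
      norm_num
      rw [min_eq_right ht.1]
    rw [hgn, hg0]
  -- A: winding along s, at t = 1
  have hA := aux_exp_one_const (φ := fun s => Wf (s, 1))
    (hWfc.comp ((continuous_id.prodMk continuous_const).continuousOn)
      (fun s hs => ⟨hs, h11⟩))
    (by
      intro s hs
      rw [hWfexp (s,1) ⟨hs, h11⟩]
      rw [hper s hs, div_self (hne (s,0) hs h01)])
  -- A 1 = 0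
  have hA1 : Wf ((1:ℝ), (1:ℝ)) = 0 := by
    rw [hWf]
    apply Finset.sum_eq_zero
    intro j hj
    rw [Finset.mem_range] at hj
    have hj1 : (((j:ℝ)+1)/n) = (((j+1:ℕ)):ℝ)/n := by push_cast; ring
    have e1 : H (1, min 1 (((j:ℝ)+1)/n)) = 1 := by
      apply htop
      rw [hj1]
      exact hmin_mem 1 h11 (j+1) hj
    have e2 : H (1, min 1 ((j:ℝ)/n)) = 1 := by
      apply htop
      exact hmin_mem 1 h11 j hj.le
    simp only
    rw [e1, e2, div_one, Complex.log_one]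
  -- B: winding along t at s = 0
  have hφ := aux_exp_one_const (φ := fun t => Wf (0, t) - (lam t - lam 0))
    (((hWfc.comp ((continuous_const.prodMk continuous_id).continuousOn)
      (fun t ht => ⟨h01, ht⟩))).sub (hlamc.sub continuousOn_const))
    (by
      intro t ht
      rw [Complex.exp_sub, hWfexp (0,t) ⟨h01, ht⟩, Complex.exp_sub, hlam t ht, hlam 0 h01]
      simp only
      apply div_self
      exact div_ne_zero (hne (0,t) h01 ht) (hne (0,0) h01 h01))
  have hB0 : Wf ((0:ℝ), (0:ℝ)) = 0 := by
    rw [hWf]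
    apply Finset.sum_eq_zero
    intro j hj
    rw [Finset.mem_range] at hj
    have hj1 : (((j:ℝ)+1)/n) = (((j+1:ℕ)):ℝ)/n := by push_cast; ring
    have e1 : min (0:ℝ) (((j:ℝ)+1)/n) = 0 := by
      apply min_eq_left
      rw [hj1]
      exact (hjn (j+1) hj).1
    have e2 : min (0:ℝ) ((j:ℝ)/n) = 0 := min_eq_left (hjn j hj.le).1
    simp only
    rw [e1, e2, div_self (hne (0,0) h01 h01), Complex.log_one]
  have hW01 : Wf ((0:ℝ),(1:ℝ)) = 0 := by rw [← hA]; exact hA1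
  rw [hW01, hB0, hjump] at hφ
  have h2pi : (2 * Real.pi * Complex.I : ℂ) ≠ 0 := by
    simp [Complex.ext_iff, Real.pi_ne_zero]
  exact h2pi (by linear_combination -hφ)

lemma aux_exterior_joined {r₁ : ℝ} (hr : 0 < r₁) {x y : ℂ} (hx : r₁ < ‖x‖) (hy : r₁ < ‖y‖) :
    JoinedIn {z : ℂ | r₁ < ‖z‖} x y := by
  set X : Set ℂ := {z : ℂ | r₁ < ‖z‖} with hX
  set r₂ : ℝ := max ‖x‖ ‖y‖ with hr₂def
  have hr₂ : r₁ < r₂ := lt_of_lt_of_le hx (le_max_left _ _)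
  have hr₂pos : 0 < r₂ := lt_trans hr hr₂
  have hradial : ∀ w : ℂ, r₁ < ‖w‖ → ‖w‖ ≤ r₂ → JoinedIn X w ((r₂ / ‖w‖ : ℝ) • w) := by
    intro w hw hwr₂
    have hwpos : 0 < ‖w‖ := lt_trans hr hw
    have hseg : segment ℝ w ((r₂ / ‖w‖ : ℝ) • w) ⊆ X := by
      rintro z ⟨α, β, hα, hβ, hαβ, rfl⟩
      show r₁ < ‖α • w + β • ((r₂ / ‖w‖ : ℝ) • w)‖
      have heq : α • w + β • ((r₂ / ‖w‖ : ℝ) • w) = ((α + β * (r₂ / ‖w‖) : ℝ)) • w := by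
        rw [smul_smul, ← add_smul]
      have hc1 : 1 ≤ r₂ / ‖w‖ := (one_le_div hwpos).mpr hwr₂
      have hc : 1 ≤ α + β * (r₂ / ‖w‖) := by nlinarith
      rw [heq, norm_smul, Real.norm_eq_abs, _root_.abs_of_pos (by linarith)]
      calc r₁ < ‖w‖ := hw
        _ = 1 * ‖w‖ := (one_mul _).symm
        _ ≤ (α + β * (r₂ / ‖w‖)) * ‖w‖ := mul_le_mul_of_nonneg_right hc (norm_nonneg w)
    exact (((convex_segment _ _).isPathConnected ⟨w, left_mem_segment ℝ _ _⟩).joinedIn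
      w (left_mem_segment ℝ _ _) _ (right_mem_segment ℝ _ _)).mono hseg
  have hxj := hradial x hx (le_max_left _ _)
  have hyj := hradial y hy (le_max_right _ _)
  have hsphmem : ∀ w : ℂ, 0 < ‖w‖ → ‖w‖ ≤ r₂ → ((r₂ / ‖w‖ : ℝ) • w) ∈ sphere (0:ℂ) r₂ := by
    intro w hwpos hwr₂
    rw [mem_sphere_zero_iff_norm, norm_smul, Real.norm_eq_abs,
      _root_.abs_of_pos (by positivity), div_mul_cancel₀]
    exact hwpos.ne'
  have hsph : IsPathConnected (sphere (0:ℂ) r₂) :=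
    isPathConnected_sphere (by rw [rank_real_complex]; exact Cardinal.one_lt_two) 0 hr₂pos.le
  have hsphX : sphere (0:ℂ) r₂ ⊆ X := by
    intro z hz
    rw [mem_sphere_zero_iff_norm] at hz
    show r₁ < ‖z‖
    rw [hz]; exact hr₂
  have hj2 : JoinedIn X ((r₂ / ‖x‖ : ℝ) • x) ((r₂ / ‖y‖ : ℝ) • y) :=
    (hsph.joinedIn _ (hsphmem x (lt_trans hr hx) (le_max_left _ _)) _
      (hsphmem y (lt_trans hr hy) (le_max_right _ _))).mono hsphX
  exact (hxj.trans hj2).trans hyj.symm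

/-- If `∞` is the Baker omitted value of the transcendental entire
function `f`, then the image under `f` of every unbounded curve is unbounded. -/
theorem stmt9 (f : ℂ → ℂ) (hf : TranscEntire f)
    (hbov : BakerOmittedValueInf f) :
    ∀ γ : ℝ → ℂ, ContinuousOn γ (Set.Ici 0) → Tendsto γ atTop (Bornology.cobounded ℂ) → ¬ Bornology.IsBounded (f '' (γ '' Set.Ici 0)) := by
  intro γ hγc hγt hbdd
  obtain ⟨hdiff, hpoly⟩ := hf
  obtain ⟨R₀, hR₀pos, hbov'⟩ := hbov
  obtain ⟨M, hM⟩ := isBounded_iff_forall_norm_le.mp hbdd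
  set R : ℝ := max R₀ M + 1 with hR
  have hRR₀ : R₀ < R := lt_of_le_of_lt (le_max_left _ _) (lt_add_one _)
  have hRM : M < R := lt_of_le_of_lt (le_max_right _ _) (lt_add_one _)
  set S : Set ℂ := {z : ℂ | R < ‖f z‖} with hS
  have hSopen : IsOpen S := isOpen_lt continuous_const hdiff.continuous.norm
  have hbc : ∀ z ∈ frontier S, Bornology.IsBounded (connectedComponentIn (frontier S) z) :=
    hbov' R hRR₀
  set F : Set ℂ := frontier S with hFdef
  have hFclosed : IsClosed F := isClosed_frontier
  -- S nonempty
  have hSne : S.Nonempty := by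
    by_contra hSe
    rw [not_nonempty_iff_eq_empty] at hSe
    have hbd : Bornology.IsBounded (range f) := by
      apply isBounded_iff_forall_norm_le.mpr
      refine ⟨R, ?_⟩
      rintro w ⟨z, rfl⟩
      by_contra hgt
      push_neg at hgt
      exact absurd (show z ∈ S from hgt) (by rw [hSe]; exact notMem_empty z)
    have hconst := hdiff.apply_eq_apply_of_bounded hbd
    apply hpoly
    exact ⟨Polynomial.C (f 0), funext fun z => by rw [Polynomial.eval_C]; exact hconst z 0⟩
  obtain ⟨a, ha⟩ := hSne
  have ha : R < ‖f a‖ := ha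
  set V : Set ℂ := connectedComponentIn S a with hV
  have haV : a ∈ V := mem_connectedComponentIn ha
  have hVopen : IsOpen V := hSopen.connectedComponentIn
  have hVS : V ⊆ S := connectedComponentIn_subset S a
  have hVunbdd : ¬ Bornology.IsBounded V := aux_cc_unbounded hdiff ha
  -- curve
  set Γ : Set ℂ := γ '' Ici 0 with hΓ
  have hΓconn : IsPreconnected Γ := (isPreconnected_Ici).image γ hγc
  have hΓT : ∀ z ∈ Γ, ‖f z‖ < R := fun z hz =>
    lt_of_le_of_lt (hM (f z) (mem_image_of_mem f hz)) hRM
  have hclS : closure S ⊆ {z : ℂ | R ≤ ‖f z‖} :=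
    closure_minimal (fun z hz => show R ≤ ‖f z‖ from le_of_lt hz)
      (isClosed_le continuous_const hdiff.continuous.norm)
  set E : Set ℂ := (closure S)ᶜ with hE
  have hEopen : IsOpen E := isClosed_closure.isOpen_compl
  have hΓE : Γ ⊆ E := fun z hz hcl => absurd (hclS hcl) (not_le.mpr (hΓT z hz))
  set b : ℂ := γ 0 with hb
  have hbΓ : b ∈ Γ := ⟨0, self_mem_Ici, rfl⟩
  set W : Set ℂ := connectedComponentIn E b with hW
  have hWopen : IsOpen W := hEopen.connectedComponentIn
  have hΓW : Γ ⊆ W := hΓconn.subset_connectedComponentIn hbΓ hΓE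
  have hWE : W ⊆ E := connectedComponentIn_subset E b
  have hbW : b ∈ W := mem_connectedComponentIn (hΓE hbΓ)
  have hWunbdd : ¬ Bornology.IsBounded W := by
    intro hbd
    obtain ⟨M₁, hM₁⟩ := isBounded_iff_forall_norm_le.mp hbd
    have hn := tendsto_norm_atTop_iff_cobounded.mpr hγt
    obtain ⟨t, htM, ht0⟩ := ((hn.eventually_gt_atTop M₁).and (eventually_ge_atTop (0:ℝ))).exists
    exact absurd (hM₁ (γ t) (hΓW ⟨t, ht0, rfl⟩)) (not_le.mpr htM)
  -- disjointness facts
  have hFS : ∀ z ∈ F, z ∉ S := by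
    intro z hz
    rw [hFdef, hSopen.frontier_eq] at hz
    exact hz.2
  have hFclS : F ⊆ closure S := frontier_subset_closure
  have haF : a ∉ F := fun h => hFS a h ha
  have hbclS : b ∉ closure S := fun h => absurd (hclS h) (not_le.mpr (hΓT b hbΓ))
  have hbF : b ∉ F := fun h => hbclS (hFclS h)
  have hab : a ≠ b := by
    intro h
    rw [← h] at hbclS
    exact hbclS (subset_closure ha)
  -- splitting
  set ρ : ℝ := ‖a‖ + ‖b‖ + 1 with hρ
  obtain ⟨Fb, Fu, hunion, hdisj, hFbcpt, hFuclosed, hFufar, _⟩ := aux_split hFclosed hbc ρ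
  have hFbF : Fb ⊆ F := by rw [← hunion]; exact subset_union_left
  have hFuF : Fu ⊆ F := by rw [← hunion]; exact subset_union_right
  obtain ⟨r₁', hr₁'⟩ := isBounded_iff_forall_norm_le.mp hFbcpt.isBounded
  set r₁ : ℝ := max r₁' ρ + 1 with hr₁def
  have hFbr₁ : ∀ z ∈ Fb, ‖z‖ < r₁ :=
    fun z hz => lt_of_le_of_lt (le_trans (hr₁' z hz) (le_max_left _ _)) (lt_add_one _)
  have hρpos : 0 < ρ := by positivity
  have hρr₁ : ρ < r₁ := lt_of_le_of_lt (le_max_right _ _) (lt_add_one _)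
  have hr₁pos : 0 < r₁ := lt_trans hρpos hρr₁
  -- joining a and b in Fbᶜ
  have hVconn : IsConnected V := by
    rw [hV]; exact isConnected_connectedComponentIn_iff.mpr ha
  have hVpath : IsPathConnected V := hVopen.isConnected_iff_isPathConnected.mp hVconn
  have hWconn : IsConnected W := by
    rw [hW]; exact isConnected_connectedComponentIn_iff.mpr (hΓE hbΓ)
  have hWpath : IsPathConnected W := hWopen.isConnected_iff_isPathConnected.mp hWconn
  obtain ⟨a', ha'V, ha'big⟩ : ∃ a', a' ∈ V ∧ r₁ < ‖a'‖ := by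
    by_contra hcon
    push_neg at hcon
    exact hVunbdd (isBounded_iff_forall_norm_le.mpr ⟨r₁, fun z hz => hcon z hz⟩)
  obtain ⟨b', hb'W, hb'big⟩ : ∃ b', b' ∈ W ∧ r₁ < ‖b'‖ := by
    by_contra hcon
    push_neg at hcon
    exact hWunbdd (isBounded_iff_forall_norm_le.mpr ⟨r₁, fun z hz => hcon z hz⟩)
  have hSFb : ∀ z ∈ S, z ∉ Fb := fun z hz h => hFS z (hFbF h) hz
  have hEFb : ∀ z ∈ E, z ∉ Fb := fun z hz h => hz (hFclS (hFbF h))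
  have hj1 : JoinedIn Fbᶜ a a' :=
    (hVpath.joinedIn a haV a' ha'V).mono (fun z hz => hSFb z (hVS hz))
  have hj3 : JoinedIn Fbᶜ b' b :=
    (hWpath.joinedIn b' hb'W b hbW).mono (fun z hz => hEFb z (hWE hz))
  have hj2 : JoinedIn Fbᶜ a' b' :=
    (aux_exterior_joined hr₁pos ha'big hb'big).mono
      (fun z hz h => absurd (hFbr₁ z h) (not_lt.mpr (le_of_lt hz)))
  have hjoined : JoinedIn Fbᶜ a b := (hj1.trans hj2).trans hj3
  obtain ⟨θb, hθbc, hθbexp⟩ := aux_chain_log hFbcpt hjoined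
  classical
  set g : ℂ → ℂ := fun z => (z - a) / (z - b) with hg
  -- Fu avoids the segment [a,b]
  have hFuseg : ∀ z ∈ Fu, z ∉ segment ℝ a b := by
    intro z hz hseg
    have hn : ‖z‖ ≤ ‖a‖ + ‖b‖ := by
      obtain ⟨α, β, hα, hβ, hαβ, rfl⟩ := hseg
      calc ‖α • a + β • b‖ ≤ ‖α • a‖ + ‖β • b‖ := norm_add_le _ _
        _ = α * ‖a‖ + β * ‖b‖ := by
            rw [norm_smul, norm_smul, Real.norm_eq_abs, Real.norm_eq_abs,
              _root_.abs_of_nonneg hα, _root_.abs_of_nonneg hβ]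
        _ ≤ ‖a‖ + ‖b‖ := by nlinarith [norm_nonneg a, norm_nonneg b]
    have := hFufar z hz
    rw [hρ] at this
    linarith
  have hθF_ne : ∀ z ∈ F, z - a ≠ 0 ∧ z - b ≠ 0 := fun z hz =>
    ⟨sub_ne_zero.2 (fun h => haF (h ▸ hz)), sub_ne_zero.2 (fun h => hbF (h ▸ hz))⟩
  set θF : ℂ → ℂ := fun z => if z ∈ Fb then θb z else Complex.log (g z) with hθF
  have hθFc : ContinuousOn θF F := by
    rw [← hunion]
    apply aux_glue hFbcpt.isClosed hFuclosed hθbc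
    · intro z hz
      have hcg : ContinuousWithinAt g Fu z := by
        apply ContinuousWithinAt.div
        · exact (continuous_id.sub continuous_const).continuousWithinAt
        · exact (continuous_id.sub continuous_const).continuousWithinAt
        · exact (hθF_ne z (hFuF hz)).2
      exact hcg.clog (aux_ratio_slit (hFuseg z hz))
    · intro z hz
      exact absurd hz (by rw [hdisj.inter_eq]; exact notMem_empty z)
  have hθFexp : ∀ z ∈ F, Complex.exp (θF z) = g z := by
    intro z hz
    by_cases hzb : z ∈ Fb
    · simp only [hθF, if_pos hzb]
      exact hθbexp z hzb
    · simp only [hθF, if_neg hzb]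
      exact Complex.exp_log (div_ne_zero (hθF_ne z hz).1 (hθF_ne z hz).2)
  -- scale P
  set P : ℝ := max (max (r₁ + 1) (‖a - b‖ + ‖b‖ + 1)) 1 with hP
  have hPr₁ : r₁ < P :=
    lt_of_lt_of_le (lt_add_one r₁) (le_trans (le_max_left _ _) (le_max_left _ _))
  have hPb' : ‖a - b‖ + ‖b‖ + 1 ≤ P := le_trans (le_max_right _ _) (le_max_left _ _)
  have hP1 : 1 ≤ P := le_max_right _ _
  have hPa : ‖a‖ < P := by
    have : ‖a‖ ≤ ‖a - b‖ + ‖b‖ := by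
      calc ‖a‖ = ‖(a - b) + b‖ := by ring_nf
        _ ≤ ‖a - b‖ + ‖b‖ := norm_add_le _ _
    linarith
  have hPbn : ‖b‖ < P := by
    have : (0:ℝ) ≤ ‖a - b‖ := norm_nonneg _
    linarith
  have hfar_ne : ∀ z : ℂ, P ≤ ‖z‖ → z - a ≠ 0 ∧ z - b ≠ 0 := by
    intro z hz
    constructor
    · rw [sub_ne_zero]
      intro h; rw [h] at hz; linarith
    · rw [sub_ne_zero]
      intro h; rw [h] at hz; linarith
  have hfar : ∀ z : ℂ, P ≤ ‖z‖ → ‖g z - 1‖ < 1 := by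
    intro z hz
    have hzb : z - b ≠ 0 := (hfar_ne z hz).2
    have heq : g z - 1 = (b - a) / (z - b) := by
      rw [hg]
      field_simp
      ring
    rw [heq, norm_div]
    rw [div_lt_one (norm_pos_iff.mpr hzb)]
    have h1 : ‖z‖ - ‖b‖ ≤ ‖z - b‖ := norm_sub_norm_le z b
    have h2 : ‖b - a‖ = ‖a - b‖ := norm_sub_rev b a
    linarith
  have hfar_slit : ∀ z : ℂ, P ≤ ‖z‖ → g z ∈ Complex.slitPlane :=
    fun z hz => aux_ball_slit (hfar z hz)
  -- F∗ and θ∗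
  set Fstar : Set ℂ := F ∪ {z : ℂ | P ≤ ‖z‖} with hFstardef
  have hPclosed : IsClosed {z : ℂ | P ≤ ‖z‖} := isClosed_le continuous_const continuous_norm
  have hFstarclosed : IsClosed Fstar := hFclosed.union hPclosed
  set θstar : ℂ → ℂ := fun z => if z ∈ F then θF z else Complex.log (g z) with hθstar
  have hθstarc : ContinuousOn θstar Fstar := by
    apply aux_glue hFclosed hPclosed hθFc
    · intro z hz
      have hcg : ContinuousWithinAt g {z : ℂ | P ≤ ‖z‖} z := by
        apply ContinuousWithinAt.div
        · exact (continuous_id.sub continuous_const).continuousWithinAt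
        · exact (continuous_id.sub continuous_const).continuousWithinAt
        · exact (hfar_ne z hz).2
      exact hcg.clog (hfar_slit z hz)
    · rintro z ⟨hzF, hzP⟩
      have hzFu : z ∉ Fb := fun h =>
        absurd (hFbr₁ z h) (not_lt.mpr (le_trans hPr₁.le hzP))
      simp only [hθF, if_neg hzFu]
  have hθstarexp : ∀ z ∈ Fstar, Complex.exp (θstar z) = g z := by
    intro z hz
    by_cases hzF : z ∈ F
    · simp only [hθstar, if_pos hzF]
      exact hθFexp z hzF
    · simp only [hθstar, if_neg hzF]
      have hzP : P ≤ ‖z‖ := hz.resolve_left hzF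
      exact Complex.exp_log (div_ne_zero (hfar_ne z hzP).1 (hfar_ne z hzP).2)
  -- Tietze extension
  obtain ⟨θt, hθt⟩ := ContinuousMap.exists_restrict_eq (Y := ℂ) hFstarclosed
    ⟨_, continuousOn_iff_continuous_restrict.mp hθstarc⟩
  have hθtF : ∀ z (hz : z ∈ Fstar), θt z = θstar z := by
    intro z hz
    have := congrFun (congrArg DFunLike.coe hθt) ⟨z, hz⟩
    simpa using this
  -- the function u
  set u : ℂ → ℂ := fun z => g z * Complex.exp (-θt z) with hu
  have hu1 : ∀ z ∈ Fstar, u z = 1 := by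
    intro z hz
    simp only [hu]
    rw [hθtF z hz, ← hθstarexp z hz, ← Complex.exp_add, add_neg_cancel, Complex.exp_zero]
  have hucont : ∀ z : ℂ, z ≠ b → ContinuousAt u z := by
    intro z hzb
    apply ContinuousAt.mul
    · apply ContinuousAt.div
      · exact (continuous_id.sub continuous_const).continuousAt
      · exact (continuous_id.sub continuous_const).continuousAt
      · exact sub_ne_zero.2 hzb
    · exact (Complex.continuous_exp.comp (θt.continuous.neg)).continuousAt
  have huzero : ∀ z : ℂ, z ≠ a → z ≠ b → u z ≠ 0 := by
    intro z hza hzb h0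
    simp only [hu] at h0
    rcases mul_eq_zero.mp h0 with h1 | h2
    · simp only [hg] at h1
      rcases div_eq_zero_iff.mp h1 with h3 | h4
      · exact hza (by linear_combination h3)
      · exact hzb (by linear_combination h4)
    · exact Complex.exp_ne_zero _ h2
  -- Ω
  set Ω : Set ℂ := V ∪ {z : ℂ | P < ‖z‖} with hΩdef
  have hΩopen : IsOpen Ω := hVopen.union (isOpen_lt continuous_const continuous_norm)
  have haΩ : a ∈ Ω := mem_union_left _ haV
  have hclP : closure {z : ℂ | P < ‖z‖} ⊆ {z : ℂ | P ≤ ‖z‖} :=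
    closure_minimal (fun z hz => show P ≤ ‖z‖ from le_of_lt hz) hPclosed
  have hbΩ : b ∉ closure Ω := by
    rw [hΩdef, closure_union]
    rintro (hb1 | hb2)
    · exact hbclS (closure_mono hVS hb1)
    · exact absurd (hclP hb2) (not_le.mpr hPbn)
  have hfrΩ : frontier Ω ⊆ Fstar := by
    intro z hz
    rcases frontier_union_subset V {z : ℂ | P < ‖z‖} hz with h1 | h2
    · exact mem_union_left _ (aux_frontier_cc hSopen a h1.1)
    · exact mem_union_right _ (hclP (frontier_subset_closure h2.2))
  set Φ : ℂ → ℂ := fun z => if z ∈ Ω then u z else 1 with hΦdef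
  have hΦcont : Continuous Φ := by
    rw [continuous_iff_continuousAt]
    intro z
    by_cases hzΩ : z ∈ Ω
    · have hev : Φ =ᶠ[nhds z] u :=
        eventually_of_mem (hΩopen.mem_nhds hzΩ) (fun w hw => by simp only [hΦdef, if_pos hw])
      rw [continuousAt_congr hev]
      exact hucont z (fun h => hbΩ (h ▸ subset_closure hzΩ))
    · by_cases hzcl : z ∈ closure Ω
      · have hzfr : z ∈ frontier Ω := ⟨hzcl, by rwa [hΩopen.interior_eq]⟩
        have hzb : z ≠ b := fun h => hbΩ (h ▸ hzcl)
        have hu1z : u z = 1 := hu1 z (hfrΩ hzfr)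
        have hΦz : Φ z = 1 := by simp only [hΦdef, if_neg hzΩ]
        rw [ContinuousAt, hΦz, Metric.tendsto_nhds]
        intro ε hε
        have huc : Tendsto u (nhds z) (nhds 1) := hu1z ▸ (hucont z hzb).tendsto
        have hev := (Metric.tendsto_nhds.mp huc) ε hε
        filter_upwards [hev] with w hw
        by_cases hwΩ : w ∈ Ω
        · simpa only [hΦdef, if_pos hwΩ] using hw
        · simp only [hΦdef, if_neg hwΩ]
          simpa using hε
      · have hev : Φ =ᶠ[nhds z] (fun _ => 1) :=
          eventually_of_mem ((isOpen_compl_iff.mpr isClosed_closure).mem_nhds hzcl)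
            (fun w hw => by simp only [hΦdef, if_neg (fun h => hw (subset_closure h))])
        rw [continuousAt_congr hev]
        exact continuousAt_const
  have hΦne : ∀ z : ℂ, z ≠ a → Φ z ≠ 0 := by
    intro z hza
    by_cases hzΩ : z ∈ Ω
    · simp only [hΦdef, if_pos hzΩ]
      exact huzero z hza (fun h => hbΩ (h ▸ subset_closure hzΩ))
    · simp only [hΦdef, if_neg hzΩ]
      exact one_ne_zero
  have hΦΩ : ∀ z ∈ Ω, Φ z = u z := fun z hz => by simp only [hΦdef, if_pos hz]
  -- ψ and the small radius
  set ψ : ℂ → ℂ := fun z => Complex.exp (-θt z) / (z - b) with hψ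
  have huψ : ∀ z : ℂ, z ≠ b → u z = (z - a) * ψ z := by
    intro z hzb
    have h1 : z - b ≠ 0 := sub_ne_zero.2 hzb
    simp only [hu, hψ, hg]
    field_simp
  have hψa_ne : ψ a ≠ 0 := div_ne_zero (Complex.exp_ne_zero _) (sub_ne_zero.2 hab)
  have hψcont : ∀ z : ℂ, z ≠ b → ContinuousAt ψ z := by
    intro z hzb
    apply ContinuousAt.div
    · exact (Complex.continuous_exp.comp (θt.continuous.neg)).continuousAt
    · exact (continuous_id.sub continuous_const).continuousAt
    · exact sub_ne_zero.2 hzb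
  obtain ⟨ε₀, hε₀pos, hε₀V⟩ := Metric.isOpen_iff.mp hVopen a haV
  obtain ⟨ε₁, hε₁pos, hε₁⟩ := Metric.continuousAt_iff.mp (hψcont a hab) ‖ψ a‖
    (norm_pos_iff.mpr hψa_ne)
  set r₀ : ℝ := min (min (ε₀ / 2) (ε₁ / 2)) 1 with hr₀def
  have hr₀pos : 0 < r₀ := by positivity
  have hr₀1 : r₀ ≤ 1 := min_le_right _ _
  have hr₀ball : closedBall a r₀ ⊆ V := by
    intro z hz
    apply hε₀V
    rw [mem_ball]
    calc dist z a ≤ r₀ := mem_closedBall.mp hz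
      _ ≤ ε₀ / 2 := le_trans (min_le_left _ _) (min_le_left _ _)
      _ < ε₀ := by linarith
  have hr₀ψ : ∀ z ∈ closedBall a r₀, ‖ψ z - ψ a‖ < ‖ψ a‖ := by
    intro z hz
    have : dist z a < ε₁ := by
      calc dist z a ≤ r₀ := mem_closedBall.mp hz
        _ ≤ ε₁ / 2 := le_trans (min_le_left _ _) (min_le_right _ _)
        _ < ε₁ := by linarith
    have := hε₁ this
    rwa [dist_eq_norm] at this
  -- big radius Q
  set Q : ℝ := P + ‖a‖ + 1 with hQdef
  have hr₀Q : r₀ ≤ Q := by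
    have : (0:ℝ) ≤ ‖a‖ := norm_nonneg _
    calc r₀ ≤ 1 := hr₀1
      _ ≤ P := hP1
      _ ≤ Q := by rw [hQdef]; linarith
  -- circle parametrization
  set cir : ℝ → ℝ → ℂ := fun r t => a + (r : ℂ) * Complex.exp (((2 * Real.pi * t : ℝ) : ℂ) * Complex.I)
    with hcir
  have hcir_sub : ∀ r t, cir r t - a = (r : ℂ) * Complex.exp (((2 * Real.pi * t : ℝ) : ℂ) * Complex.I) := by
    intro r t; rw [hcir]; ring
  have hcir_norm : ∀ r t, 0 ≤ r → ‖cir r t - a‖ = r := by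
    intro r t hr
    rw [hcir_sub, norm_mul]
    have h1 : ‖Complex.exp (((2 * Real.pi * t : ℝ) : ℂ) * Complex.I)‖ = 1 := by
      exact Complex.norm_exp_ofReal_mul_I _
    rw [h1, mul_one, Complex.norm_real, Real.norm_eq_abs, _root_.abs_of_nonneg hr]
  have hcir_cont : Continuous fun p : ℝ × ℝ => cir (r₀ + p.1 * (Q - r₀)) p.2 := by
    simp only [hcir]
    apply Continuous.add continuous_const
    apply Continuous.mul
    · exact Complex.continuous_ofReal.comp
        (continuous_const.add (continuous_fst.mul continuous_const))
    · exact Complex.continuous_exp.comp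
        ((Complex.continuous_ofReal.comp (continuous_const.mul continuous_snd)).mul
          continuous_const)
  set H : ℝ × ℝ → ℂ := fun p => Φ (cir (r₀ + p.1 * (Q - r₀)) p.2) with hH
  have hrpos : ∀ s : ℝ, s ∈ Icc (0:ℝ) 1 → 0 < r₀ + s * (Q - r₀) := by
    intro s hs
    have h1 : 0 ≤ s * (Q - r₀) := mul_nonneg hs.1 (by linarith)
    linarith
  have hHcont : Continuous H := hΦcont.comp hcir_cont
  have hHne : ∀ p : ℝ × ℝ, p.1 ∈ Icc (0:ℝ) 1 → p.2 ∈ Icc (0:ℝ) 1 → H p ≠ 0 := by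
    rintro ⟨s, t⟩ hs ht
    apply hΦne
    intro hca
    have := hcir_norm (r₀ + s * (Q - r₀)) t (hrpos s hs).le
    rw [hca] at this
    simp at this
    linarith [hrpos s hs]
  have hcir_per : ∀ r : ℝ, cir r 1 = cir r 0 := by
    intro r
    simp only [hcir]
    rw [show ((2 * Real.pi * 1 : ℝ) : ℂ) * Complex.I = 2 * Real.pi * Complex.I by
        push_cast; ring,
      Complex.exp_two_pi_mul_I,
      show ((2 * Real.pi * 0 : ℝ) : ℂ) * Complex.I = 0 by push_cast; ring, Complex.exp_zero]
  have hHper : ∀ s ∈ Icc (0:ℝ) 1, H (s, 1) = H (s, 0) := by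
    intro s hs
    simp only [hH, hcir_per]
  have hHtop : ∀ t ∈ Icc (0:ℝ) 1, H (1, t) = 1 := by
    intro t ht
    simp only [hH]
    have hr : r₀ + 1 * (Q - r₀) = Q := by ring
    rw [hr]
    have hnorm : P < ‖cir Q t‖ := by
      have h1 : ‖cir Q t - a‖ = Q := hcir_norm Q t (by rw [hQdef]; positivity)
      have h2 : ‖cir Q t - a‖ ≤ ‖cir Q t‖ + ‖a‖ := norm_sub_le _ _
      rw [h1, hQdef] at h2
      linarith
    have hΩmem : cir Q t ∈ Ω := mem_union_right _ hnorm
    rw [hΦΩ _ hΩmem]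
    exact hu1 _ (mem_union_right _ (le_of_lt hnorm))
  -- the logarithm on the small circle
  have hcir_ball : ∀ t : ℝ, cir r₀ t ∈ closedBall a r₀ := by
    intro t
    rw [mem_closedBall, dist_eq_norm]
    rw [hcir_norm r₀ t hr₀pos.le]
  have hψc_ne : ∀ z ∈ closedBall a r₀, ψ z ≠ 0 := by
    intro z hz h0
    have h := hr₀ψ z hz
    rw [h0, zero_sub, norm_neg] at h
    exact absurd h (lt_irrefl _)
  have hcirb : ∀ t : ℝ, cir r₀ t ≠ b := by
    intro t h
    have hmem : cir r₀ t ∈ V := hr₀ball (hcir_ball t)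
    rw [h] at hmem
    exact hbclS (subset_closure (hVS hmem))
  set lam : ℝ → ℂ := fun t => (Real.log r₀ : ℂ) + ((2 * Real.pi * t : ℝ) : ℂ) * Complex.I
      + Complex.log (ψ a) + Complex.log (ψ (cir r₀ t) / ψ a) with hlamdef
  have hlamc : ContinuousOn lam (Icc 0 1) := by
    apply ContinuousOn.add
    · apply ContinuousOn.add
      · apply ContinuousOn.add continuousOn_const
        exact ((Complex.continuous_ofReal.comp (continuous_const.mul continuous_id)).mul
          continuous_const).continuousOn
      · exact continuousOn_const
    · intro t ht
      have hcc : ContinuousWithinAt (fun t : ℝ => ψ (cir r₀ t) / ψ a) (Icc 0 1) t := by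
        apply ContinuousWithinAt.div _ continuousWithinAt_const hψa_ne
        have h1 : ContinuousAt ψ (cir r₀ t) := hψcont _ (hcirb t)
        have h2 : Continuous (fun t : ℝ => cir r₀ t) := by
          simp only [hcir]
          apply Continuous.add continuous_const
          exact continuous_const.mul (Complex.continuous_exp.comp
            ((Complex.continuous_ofReal.comp (continuous_const.mul continuous_id)).mul
              continuous_const))
        exact (h1.comp h2.continuousAt).continuousWithinAt
      have hslit := (aux_ratio_near hψa_ne (hr₀ψ _ (hcir_ball t))).1
      exact hcc.clog hslit
  have hlam : ∀ t ∈ Icc (0:ℝ) 1, Complex.exp (lam t) = H (0, t) := by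
    intro t ht
    simp only [hlamdef]
    rw [Complex.exp_add, Complex.exp_add, Complex.exp_add]
    rw [Complex.exp_log hψa_ne, Complex.exp_log (div_ne_zero (hψc_ne _ (hcir_ball t)) hψa_ne)]
    have he1 : Complex.exp ((Real.log r₀ : ℂ)) = (r₀ : ℂ) := by
      rw [← Complex.ofReal_exp, Real.exp_log hr₀pos]
    rw [he1]
    have hH0 : H (0, t) = Φ (cir r₀ t) := by
      simp only [hH]
      norm_num
    rw [hH0, hΦΩ _ (mem_union_left _ (hr₀ball (hcir_ball t))), huψ _ (hcirb t)]
    rw [hcir_sub r₀ t]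
    rw [mul_assoc, mul_comm (ψ a), div_mul_cancel₀ _ hψa_ne]
  have hjump : lam 1 - lam 0 = 2 * Real.pi * Complex.I := by
    simp only [hlamdef]
    rw [hcir_per r₀]
    push_cast
    ring
  exact aux_winding hHcont hHne hHper hHtop hlamc hlam hjump
end

section
/- Let f be a transcendental entire function such that the image of every unbounded curve under f is unbounded. Then every connected component of the preimage of any bounded simply connected domain under f is bounded. -/
open Complex Metric Bornology Topology Filter Set OnePoint

namespace Stmt10Aux

noncomputable def lamF (f : ℂ → ℂ) (r : ℝ) : ℝ :=
  sSup ((fun w => ‖deriv f w‖) '' Metric.closedBall 0 (max r 0 + 2))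

noncomputable def delF (f : ℂ → ℂ) (r : ℝ) : ℝ := min 1 (1 / (1 + lamF f r))

variable {f : ℂ → ℂ}

lemma lam_bddAbove (hf : Differentiable ℂ f) (r : ℝ) :
    BddAbove ((fun w => ‖deriv f w‖) '' Metric.closedBall 0 (max r 0 + 2)) := by
  have hc : Continuous (deriv f) := (hf.contDiff (n := 1)).continuous_deriv le_rfl
  exact ((isCompact_closedBall _ _).image hc.norm).bddAbove

lemma lam_nonneg (hf : Differentiable ℂ f) (r : ℝ) : 0 ≤ lamF f r := by
  have h0 : (0:ℂ) ∈ Metric.closedBall (0:ℂ) (max r 0 + 2) := by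
    simp [Metric.mem_closedBall]
    positivity
  exact (norm_nonneg (deriv f 0)).trans (le_csSup (lam_bddAbove hf r) ⟨0, h0, rfl⟩)

lemma lam_mono (hf : Differentiable ℂ f) {r s : ℝ} (h : r ≤ s) : lamF f r ≤ lamF f s := by
  refine csSup_le_csSup (lam_bddAbove hf s) ?_ ?_
  · exact ⟨‖deriv f 0‖, ⟨0, by simp [Metric.mem_closedBall]; positivity, rfl⟩⟩
  · apply Set.image_mono
    apply Metric.closedBall_subset_closedBall
    have : max r 0 ≤ max s 0 := max_le_max h le_rfl
    linarith

lemma lam_bound (hf : Differentiable ℂ f) {r : ℝ} {w : ℂ} (hw : ‖w‖ ≤ max r 0 + 2) :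
    ‖deriv f w‖ ≤ lamF f r :=
  le_csSup (lam_bddAbove hf r) ⟨w, by simpa [Metric.mem_closedBall] using hw, rfl⟩

lemma del_pos (hf : Differentiable ℂ f) (r : ℝ) : 0 < delF f r := by
  have := lam_nonneg hf r
  apply lt_min one_pos
  positivity

lemma del_le_one (f : ℂ → ℂ) (r : ℝ) : delF f r ≤ 1 := min_le_left _ _

lemma del_anti (hf : Differentiable ℂ f) {r s : ℝ} (h : r ≤ s) : delF f s ≤ delF f r := by
  have h1 := lam_nonneg hf r
  refine min_le_min le_rfl ?_
  apply one_div_le_one_div_of_le (by linarith)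
  linarith [lam_mono hf h]

lemma lam_mul_del_le (hf : Differentiable ℂ f) (r : ℝ) : lamF f r * delF f r ≤ 1 := by
  have h1 := lam_nonneg hf r
  calc lamF f r * delF f r ≤ lamF f r * (1 / (1 + lamF f r)) := by
        apply mul_le_mul_of_nonneg_left (min_le_right _ _) h1
    _ = lamF f r / (1 + lamF f r) := by ring
    _ ≤ 1 := by
        apply div_le_one_of_le₀ <;> linarith

lemma jump (hf : Differentiable ℂ f) {u v : ℂ} (h : dist u v ≤ delF f (min ‖u‖ ‖v‖))
    {t : ℝ} (ht : t ∈ Set.Icc (0:ℝ) 1) : ‖f (u + t • (v - u)) - f u‖ ≤ 1 := by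
  set m := min ‖u‖ ‖v‖ with hm
  set g : ℝ → ℂ := fun s => f (u + s • (v - u)) with hg
  have hdle1 : dist u v ≤ 1 := h.trans (del_le_one f m)
  -- derivative of g
  have hder : ∀ s : ℝ, HasDerivAt g ((v - u) • deriv f (u + s • (v - u))) s := by
    intro s
    have hc : HasDerivAt (fun s : ℝ => u + s • (v - u)) (v - u) s := by
      simpa using ((hasDerivAt_id s).smul_const (v - u)).const_add u
    have hfd : HasDerivAt f (deriv f (u + s • (v - u))) (u + s • (v - u)) :=
      (hf.differentiableAt).hasDerivAt
    have := (hfd.hasFDerivAt.restrictScalars ℝ).comp_hasDerivAt s hc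
    simpa [hg, Function.comp_def] using this
  -- bound on the derivative on [0,1]
  have hbound : ∀ s ∈ Set.Icc (0:ℝ) 1, ‖(v - u) • deriv f (u + s • (v - u))‖ ≤ lamF f m * dist u v := by
    intro s hs
    have hnorm : ‖u + s • (v - u)‖ ≤ max m 0 + 2 := by
      have h1 : ‖u‖ ≤ m + dist u v := by
        rcases min_cases ‖u‖ ‖v‖ with ⟨he, _⟩ | ⟨he, hlt⟩
        · rw [hm, he]; have := dist_nonneg (x := u) (y := v); linarith
        · rw [hm, he]
          calc ‖u‖ ≤ ‖v‖ + ‖u - v‖ := by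
                simpa using norm_add_le (v) (u - v)
            _ = ‖v‖ + dist u v := by rw [dist_eq_norm]
      have h2 : ‖s • (v - u)‖ ≤ dist u v := by
        rw [norm_smul, Real.norm_eq_abs, _root_.abs_of_nonneg hs.1]
        have : ‖v - u‖ = dist u v := by rw [dist_eq_norm, norm_sub_rev]
        rw [this]
        nlinarith [dist_nonneg (x := u) (y := v), hs.2]
      calc ‖u + s • (v - u)‖ ≤ ‖u‖ + ‖s • (v - u)‖ := norm_add_le _ _
        _ ≤ m + dist u v + dist u v := by linarith
        _ ≤ m + 2 := by linarith
        _ ≤ max m 0 + 2 := by simp [le_max_left]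
    calc ‖(v - u) • deriv f (u + s • (v - u))‖ = ‖v - u‖ * ‖deriv f (u + s • (v - u))‖ := norm_smul _ _
      _ ≤ dist u v * lamF f m := by
          apply mul_le_mul
          · rw [dist_eq_norm, norm_sub_rev]
          · exact lam_bound hf hnorm
          · exact norm_nonneg _
          · exact dist_nonneg
      _ = lamF f m * dist u v := mul_comm _ _
  -- MVT
  have hmvt := norm_image_sub_le_of_norm_deriv_le_segment'
    (f := g) (f' := fun s => (v - u) • deriv f (u + s • (v - u))) (C := lamF f m * dist u v)
    (fun s hs => (hder s).hasDerivWithinAt)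
    (fun s hs => hbound s (Set.Ico_subset_Icc_self hs)) t ht
  have hg0 : g 0 = f u := by simp [hg]
  rw [hg0] at hmvt
  have hC : lamF f m * dist u v * (t - 0) ≤ 1 := by
    have h1 : lamF f m * dist u v ≤ lamF f m * delF f m :=
      mul_le_mul_of_nonneg_left h (lam_nonneg hf m)
    have h2 := lam_mul_del_le hf m
    have h3 : 0 ≤ lamF f m * dist u v := mul_nonneg (lam_nonneg hf m) dist_nonneg
    nlinarith [ht.1, ht.2]
  calc ‖f (u + t • (v - u)) - f u‖ = ‖g t - f u‖ := rfl
    _ ≤ lamF f m * dist u v * (t - 0) := hmvt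
    _ ≤ 1 := hC



/-- Adaptive-chain adjacency relation inside `E`, at level `R`. -/
def relC (f : ℂ → ℂ) (E : Set ℂ) (R : ℝ) (u v : ℂ) : Prop :=
  (u ∈ E ∧ R ≤ ‖u‖) ∧ (v ∈ E ∧ R ≤ ‖v‖) ∧ dist u v ≤ delF f (min ‖u‖ ‖v‖)

/-- Adaptive-chain reachability. -/
def reachC (f : ℂ → ℂ) (E : Set ℂ) (R : ℝ) : ℂ → ℂ → Prop :=
  Relation.ReflTransGen (relC f E R)

variable {E : Set ℂ} {R : ℝ}

lemma relC_symm {u v : ℂ} (h : relC f E R u v) : relC f E R v u :=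
  ⟨h.2.1, h.1, by rw [dist_comm, min_comm]; exact h.2.2⟩

lemma reachC_symm {x y : ℂ} (h : reachC f E R x y) : reachC f E R y x :=
  by
    induction h with
    | refl => exact Relation.ReflTransGen.refl
    | tail _ hr ih => exact Relation.ReflTransGen.head (relC_symm hr) ih

lemma reachC_mem {x y : ℂ} (h : reachC f E R x y) (hx : x ∈ E ∧ R ≤ ‖x‖) :
    y ∈ E ∧ R ≤ ‖y‖ := by
  induction h with
  | refl => exact hx
  | tail _ hrel _ => exact hrel.2.1

/-- Anchor lemma: every point of `E` at level `R` can be chained down close to the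
disc of radius `R`. -/
lemma reach_anchor (hf : Differentiable ℂ f) (hE : IsPreconnected E) {z₀ : ℂ}
    (hz₀ : z₀ ∈ E) (hR : ‖z₀‖ + 1 ≤ R) {x : ℂ} (hx : x ∈ E) (hxR : R ≤ ‖x‖) :
    ∃ p, reachC f E R x p ∧ ‖p‖ ≤ R + 1 := by
  by_contra hcon
  push_neg at hcon
  -- hcon : ∀ p, reachC f E R x p → R + 1 < ‖p‖
  set U := {y | reachC f E R x y} with hU
  set O₁ := ⋃ y ∈ U, Metric.ball y (delF f ‖y‖ / 2) with hO₁
  set O₂ := ⋃ y ∈ E \ U, Metric.ball y (delF f ‖y‖ / 2) with hO₂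
  have hO₁o : IsOpen O₁ := isOpen_biUnion (fun _ _ => Metric.isOpen_ball)
  have hO₂o : IsOpen O₂ := isOpen_biUnion (fun _ _ => Metric.isOpen_ball)
  have hcover : E ⊆ O₁ ∪ O₂ := by
    intro y hy
    by_cases hyU : y ∈ U
    · exact Or.inl (Set.mem_biUnion hyU (Metric.mem_ball_self (half_pos (del_pos hf _))))
    · exact Or.inr (Set.mem_biUnion ⟨hy, hyU⟩ (Metric.mem_ball_self (half_pos (del_pos hf _))))
  have hne₁ : (E ∩ O₁).Nonempty := by
    refine ⟨x, hx, Set.mem_biUnion ?_ (Metric.mem_ball_self (half_pos (del_pos hf _)))⟩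
    exact Relation.ReflTransGen.refl
  have hne₂ : (E ∩ O₂).Nonempty := by
    refine ⟨z₀, hz₀, Set.mem_biUnion ⟨hz₀, fun hz₀U => ?_⟩
      (Metric.mem_ball_self (half_pos (del_pos hf _)))⟩
    have := hcon z₀ hz₀U
    linarith
  obtain ⟨w, hwE, hw₁, hw₂⟩ := hE O₁ O₂ hO₁o hO₂o hcover hne₁ hne₂
  obtain ⟨y₁, hy₁U, hwb₁⟩ := Set.mem_iUnion₂.1 hw₁
  obtain ⟨y₂, hy₂, hwb₂⟩ := Set.mem_iUnion₂.1 hw₂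
  have hy₁S : y₁ ∈ E ∧ R ≤ ‖y₁‖ := reachC_mem hy₁U ⟨hx, hxR⟩
  have hmin₁ : min ‖y₁‖ ‖y₂‖ ≤ ‖y₁‖ := min_le_left _ _
  have hmin₂ : min ‖y₁‖ ‖y₂‖ ≤ ‖y₂‖ := min_le_right _ _
  have hd : dist y₁ y₂ ≤ delF f (min ‖y₁‖ ‖y₂‖) := by
    have t1 : dist y₁ w < delF f ‖y₁‖ / 2 := by rw [dist_comm]; exact Metric.mem_ball.1 hwb₁
    have t2 : dist y₂ w < delF f ‖y₂‖ / 2 := by rw [dist_comm]; exact Metric.mem_ball.1 hwb₂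
    have a1 : delF f ‖y₁‖ ≤ delF f (min ‖y₁‖ ‖y₂‖) := del_anti hf hmin₁
    have a2 : delF f ‖y₂‖ ≤ delF f (min ‖y₁‖ ‖y₂‖) := del_anti hf hmin₂
    calc dist y₁ y₂ ≤ dist y₁ w + dist w y₂ := dist_triangle _ _ _
      _ = dist y₁ w + dist y₂ w := by rw [dist_comm w y₂]
      _ ≤ delF f ‖y₁‖ / 2 + delF f ‖y₂‖ / 2 := by linarith
      _ ≤ delF f (min ‖y₁‖ ‖y₂‖) := by linarith
  by_cases hy₂R : R ≤ ‖y₂‖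
  · exact hy₂.2 (Relation.ReflTransGen.tail hy₁U ⟨hy₁S, ⟨hy₂.1, hy₂R⟩, hd⟩)
  · push_neg at hy₂R
    have h1 : ‖y₁‖ ≤ ‖y₂‖ + dist y₁ y₂ := by
      calc ‖y₁‖ = dist y₁ 0 := by rw [dist_zero_right]
        _ ≤ dist y₁ y₂ + dist y₂ 0 := dist_triangle _ _ _
        _ = ‖y₂‖ + dist y₁ y₂ := by rw [dist_zero_right]; ring
    have h2 : dist y₁ y₂ ≤ 1 := hd.trans (del_le_one f _)
    have h3 := hcon y₁ hy₁U
    linarith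


/-- If `A ⊆ E` is unbounded, there is a point of `A` beyond level `R` whose
reach-set at level `R` is unbounded. -/
lemma exists_unbounded_reach (hf : Differentiable ℂ f) (hE : IsPreconnected E) {z₀ : ℂ}
    (hz₀ : z₀ ∈ E) (hR : ‖z₀‖ + 1 ≤ R) {A : Set ℂ} (hAE : A ⊆ E) (hA : ¬ IsBounded A) :
    ∃ y ∈ A, R ≤ ‖y‖ ∧ ¬ IsBounded {w | reachC f E R y w} := by
  by_contra hcon
  push_neg at hcon
  classical
  set UB : ℂ → Set ℂ :=
    fun a => if IsBounded {w | reachC f E R a w} then {w | reachC f E R a w} else ∅ with hUB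
  have hUBb : ∀ a, IsBounded (UB a) := by
    intro a; rw [hUB]; dsimp only; split
    · assumption
    · exact isBounded_empty
  have hUBeq : ∀ a ∈ A, R ≤ ‖a‖ → UB a = {w | reachC f E R a w} := by
    intro a ha haR; rw [hUB]; simp [hcon a ha haR]
  have hex : ∀ l : List ℂ,
      ∃ w, w ∈ A ∧ w ∉ Metric.closedBall 0 (R+1) ∪ ⋃ a ∈ {a | a ∈ l}, UB a := by
    intro l
    have hb : IsBounded (Metric.closedBall (0:ℂ) (R+1) ∪ ⋃ a ∈ {a | a ∈ l}, UB a) :=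
      (isBounded_closedBall).union ((isBounded_biUnion l.finite_toSet).2 (fun a _ => hUBb a))
    by_contra hno
    push_neg at hno
    exact hA (hb.subset hno)
  set pick : List ℂ → ℂ := fun l => (hex l).choose with hpick
  set L : ℕ → List ℂ := fun n => Nat.rec [] (fun _ ih => pick ih :: ih) n with hL
  set y : ℕ → ℂ := fun n => pick (L n) with hy
  have hLsucc : ∀ n, L (n+1) = y n :: L n := fun n => rfl
  have hyA : ∀ n, y n ∈ A := fun n => (hex (L n)).choose_spec.1
  have hyrest : ∀ n, y n ∉ Metric.closedBall (0:ℂ) (R+1) ∪ ⋃ a ∈ {a | a ∈ L n}, UB a :=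
    fun n => (hex (L n)).choose_spec.2
  have hyR : ∀ n, R + 1 < ‖y n‖ := by
    intro n
    have h1 : y n ∉ Metric.closedBall (0:ℂ) (R+1) := fun h => (hyrest n) (Or.inl h)
    rw [Metric.mem_closedBall, dist_zero_right] at h1
    linarith [not_le.1 h1]
  have hynR : ∀ n, R ≤ ‖y n‖ := fun n => by linarith [hyR n]
  have hyU : ∀ i n, y i ∈ L n → y n ∉ UB (y i) := by
    intro i n hmem hin
    exact (hyrest n) (Or.inr (Set.mem_biUnion hmem hin))
  have hmemL : ∀ i j, i < j → y i ∈ L j := by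
    intro i j hij
    induction j with
    | zero => omega
    | succ j ih =>
      rw [hLsucc j]
      rcases Nat.lt_succ_iff_lt_or_eq.1 hij with h | h
      · exact List.mem_cons_of_mem _ (ih h)
      · subst h; exact List.mem_cons_self
  have hanch : ∀ n, ∃ p, reachC f E R (y n) p ∧ ‖p‖ ≤ R + 1 :=
    fun n => reach_anchor hf hE hz₀ hR (hAE (hyA n)) (hynR n)
  set p : ℕ → ℂ := fun n => (hanch n).choose with hp
  have hpspec : ∀ n, reachC f E R (y n) (p n) ∧ ‖p n‖ ≤ R + 1 := fun n => (hanch n).choose_spec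
  have hpball : ∀ n, p n ∈ Metric.closedBall (0:ℂ) (R+1) := by
    intro n; rw [Metric.mem_closedBall, dist_zero_right]; exact (hpspec n).2
  obtain ⟨a, -, φ, hφ, hconv⟩ := (isCompact_closedBall (0:ℂ) (R+1)).tendsto_subseq hpball
  have hεpos : 0 < delF f (R+1) / 2 := half_pos (del_pos hf _)
  obtain ⟨N, hN⟩ := (Metric.tendsto_atTop.1 hconv) _ hεpos
  set i := φ N with hi
  set j := φ (N+1) with hj
  have hij : i < j := hφ (Nat.lt_succ_self N)
  have hdij : dist (p i) (p j) < delF f (R+1) := by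
    calc dist (p i) (p j) ≤ dist (p i) a + dist (p j) a := dist_triangle_right _ _ _
      _ < delF f (R+1) / 2 + delF f (R+1) / 2 := by
          have h1 := hN N le_rfl
          have h2 := hN (N+1) (Nat.le_succ N)
          rw [Function.comp_apply] at h1 h2
          exact add_lt_add h1 h2
      _ = delF f (R+1) := by ring
  have hpmem : ∀ n, p n ∈ E ∧ R ≤ ‖p n‖ :=
    fun n => reachC_mem (hpspec n).1 ⟨hAE (hyA n), hynR n⟩
  have hmin : min ‖p i‖ ‖p j‖ ≤ R + 1 := le_trans (min_le_left _ _) (hpspec i).2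
  have hrel : relC f E R (p i) (p j) :=
    ⟨hpmem i, hpmem j, le_trans hdij.le (del_anti hf hmin)⟩
  have hreach : reachC f E R (y i) (y j) :=
    ((hpspec i).1.trans (Relation.ReflTransGen.single hrel)).trans (reachC_symm (hpspec j).1)
  have hmem : y j ∈ UB (y i) := by
    rw [hUBeq (y i) (hyA i) (hynR i)]
    exact hreach
  exact hyU i j (hmemL i j hij) hmem


lemma reach_joinedIn (hf : Differentiable ℂ f) {M₀ : ℝ} (hM : ∀ w ∈ E, ‖f w‖ ≤ M₀)
    {x y : ℂ} (hx : x ∈ E ∧ R ≤ ‖x‖) (h : reachC f E R x y) :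
    JoinedIn {w : ℂ | R - 1 ≤ ‖w‖ ∧ ‖f w‖ ≤ M₀ + 1} x y := by
  induction h with
  | refl =>
    exact JoinedIn.refl ⟨by linarith [hx.2], by linarith [hM x hx.1]⟩
  | @tail b c hxb hrel ih =>
    refine ih.trans ?_
    obtain ⟨⟨hbE, hbR⟩, ⟨hcE, hcR⟩, hd⟩ := hrel
    have hd1 : dist b c ≤ 1 := hd.trans (del_le_one f _)
    have hnormcb : ‖c - b‖ = dist b c := by rw [dist_eq_norm, norm_sub_rev]
    set P : Path b c :=
      { toFun := fun t => b + (t : ℝ) • (c - b)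
        continuous_toFun := by
          exact Continuous.add continuous_const (Continuous.smul
            (continuous_subtype_val) continuous_const)
        source' := by simp
        target' := by simp }
      with hP
    have hPval : ∀ t : unitInterval, P t = b + (t : ℝ) • (c - b) := fun t => rfl
    refine ⟨P, fun t => ⟨?_, ?_⟩⟩
    · rw [hPval]
      have h1 : ‖(t:ℝ) • (c - b)‖ ≤ 1 := by
        rw [norm_smul, Real.norm_eq_abs, _root_.abs_of_nonneg t.2.1, hnormcb]
        nlinarith [t.2.2, dist_nonneg (x := b) (y := c)]
      have h2 : ‖b‖ ≤ ‖b + (t:ℝ) • (c - b)‖ + ‖(t:ℝ) • (c - b)‖ := by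
        calc ‖b‖ = ‖(b + (t:ℝ) • (c - b)) - (t:ℝ) • (c - b)‖ := by ring_nf
          _ ≤ ‖b + (t:ℝ) • (c - b)‖ + ‖(t:ℝ) • (c - b)‖ := norm_sub_le _ _
      linarith
    · rw [hPval]
      have hj := jump hf (u := b) (v := c) hd (t := (t:ℝ)) ⟨t.2.1, t.2.2⟩
      have hfb := hM b hbE
      calc ‖f (b + (t:ℝ) • (c - b))‖
          = ‖f b + (f (b + (t:ℝ) • (c - b)) - f b)‖ := by ring_nf
        _ ≤ ‖f b‖ + ‖f (b + (t:ℝ) • (c - b)) - f b‖ := norm_add_le _ _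
        _ ≤ M₀ + 1 := by linarith


lemma exists_chain (hf : Differentiable ℂ f) (hE : IsPreconnected E) {z₀ : ℂ} (hz₀ : z₀ ∈ E)
    (hEub : ¬ IsBounded E) {M₀ : ℝ} (hM : ∀ w ∈ E, ‖f w‖ ≤ M₀) :
    ∃ x : ℕ → ℂ, ∀ n : ℕ,
      JoinedIn {w : ℂ | (‖z₀‖ + 1 + n) - 1 ≤ ‖w‖ ∧ ‖f w‖ ≤ M₀ + 1} (x n) (x (n+1)) := by
  classical
  set R₁ := ‖z₀‖ + 1 with hR₁
  set P : ℕ → ℂ → Prop := fun n x =>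
    x ∈ E ∧ R₁ + (n:ℝ) ≤ ‖x‖ ∧ ¬ IsBounded {w | reachC f E (R₁ + (n:ℝ)) x w} with hPdef
  have hbase : ∃ x, P 0 x := by
    obtain ⟨y, hyE, hyR, hyu⟩ :=
      exists_unbounded_reach (R := R₁) hf hE hz₀ le_rfl subset_rfl hEub
    refine ⟨y, hyE, by simpa using hyR, by simpa using hyu⟩
  have hstep : ∀ n xx, P n xx → ∃ y, P (n+1) y ∧ reachC f E (R₁ + (n:ℝ)) xx y := by
    intro n xx hx
    have hsub : {w | reachC f E (R₁ + (n:ℝ)) xx w} ⊆ E :=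
      fun w hw => (reachC_mem hw ⟨hx.1, hx.2.1⟩).1
    have hR' : ‖z₀‖ + 1 ≤ R₁ + ((n+1 : ℕ):ℝ) := by
      rw [hR₁]; push_cast; linarith [Nat.cast_nonneg (α := ℝ) n]
    obtain ⟨y, hyA, hyR, hyu⟩ :=
      exists_unbounded_reach (R := R₁ + ((n+1:ℕ):ℝ)) hf hE hz₀ hR' hsub hx.2.2
    exact ⟨y, ⟨hsub hyA, hyR, hyu⟩, hyA⟩
  set g : ∀ n : ℕ, {xx : ℂ // P n xx} := fun n => Nat.rec ⟨hbase.choose, hbase.choose_spec⟩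
      (fun n prev => ⟨(hstep n prev.1 prev.2).choose, (hstep n prev.1 prev.2).choose_spec.1⟩) n
    with hg
  have hlink : ∀ n : ℕ, reachC f E (R₁ + (n:ℝ)) ((g n).1) ((g (n+1)).1) :=
    fun n => (hstep n (g n).1 (g n).2).choose_spec.2
  refine ⟨fun n => (g n).1, fun n => ?_⟩
  exact reach_joinedIn (R := R₁ + (n:ℝ)) hf hM ⟨(g n).2.1, (g n).2.2.1⟩ (hlink n)

lemma curve_assembly {c M₁ : ℝ} {x : ℕ → ℂ}
    (J : ∀ n : ℕ, JoinedIn {w : ℂ | c + n - 1 ≤ ‖w‖ ∧ ‖f w‖ ≤ M₁} (x n) (x (n+1))) :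
    ∃ γ : ℝ → ℂ, ContinuousOn γ (Set.Ici 0) ∧ Tendsto γ atTop (Bornology.cobounded ℂ) ∧
      ∀ t : ℝ, ‖f (γ t)‖ ≤ M₁ := by
  classical
  set p : ∀ n : ℕ, Path (x n) (x (n+1)) := fun n => (J n).somePath with hp
  have hpmem : ∀ (n : ℕ) (s : ℝ),
      (p n).extend s ∈ {w : ℂ | c + n - 1 ≤ ‖w‖ ∧ ‖f w‖ ≤ M₁} := by
    intro n s
    have hmem : (p n).extend s ∈ Set.range ((p n) : unitInterval → ℂ) := by
      rw [← Path.extend_range]; exact Set.mem_range_self s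
    obtain ⟨u, hu⟩ := hmem
    rw [← hu]
    exact (J n).somePath_mem u
  set γ : ℝ → ℂ := fun t => (p ⌊t⌋₊).extend (t - ⌊t⌋₊) with hγ
  have hagree : ∀ (n : ℕ) (t : ℝ), t ∈ Set.Icc (n:ℝ) (n+1) → γ t = (p n).extend (t - n) := by
    intro n t ht
    rcases lt_or_eq_of_le ht.2 with hlt | heq
    · have hfl : ⌊t⌋₊ = n :=
        (Nat.floor_eq_iff (le_trans (Nat.cast_nonneg n) ht.1)).2 ⟨ht.1, hlt⟩
      rw [hγ]; simp only; rw [hfl]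
    · have hfl : ⌊t⌋₊ = n + 1 := by
        rw [heq]
        rw [show ((n:ℝ) + 1) = ((n+1 : ℕ) : ℝ) by push_cast; ring]
        exact Nat.floor_natCast _
      rw [hγ]; simp only; rw [hfl, heq]
      have e1 : ((n:ℝ) + 1) - ((n+1 : ℕ) : ℝ) = 0 := by push_cast; ring
      have e2 : ((n:ℝ) + 1) - (n:ℝ) = 1 := by ring
      rw [e1, e2, Path.extend_zero, Path.extend_one]
  have hcont : ContinuousOn γ (Set.Ici 0) := by
    intro t₀ ht₀
    have hpiece : ∀ (n : ℕ) (s : ℝ), s ∈ Set.Icc (n:ℝ) (n+1) →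
        ContinuousWithinAt γ (Set.Icc (n:ℝ) (n+1)) s := by
      intro n s hs
      have hc : Continuous (fun u : ℝ => (p n).extend (u - n)) :=
        (p n).continuous_extend.comp (continuous_id.sub continuous_const)
      exact (hc.continuousWithinAt).congr (fun u hu => hagree n u hu) (hagree n s hs)
    set k := ⌊t₀⌋₊ with hk
    have hkle : (k:ℝ) ≤ t₀ := Nat.floor_le ht₀
    have hklt : t₀ < (k:ℝ) + 1 := Nat.lt_floor_add_one t₀
    rcases eq_or_lt_of_le hkle with heq | hlt
    · rcases Nat.eq_zero_or_pos k with hk0 | hkpos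
      · have ht0 : t₀ = 0 := by rw [← heq, hk0]; norm_num
        have hcwa : ContinuousWithinAt γ (Set.Icc ((0:ℕ):ℝ) ((0:ℕ)+1)) t₀ := by
          apply hpiece 0
          rw [ht0]; constructor <;> norm_num
        apply hcwa.mono_of_mem_nhdsWithin
        rw [ht0]
        have hsub : Set.Ici (0:ℝ) ∩ Set.Iio 1 ⊆ Set.Icc ((0:ℕ):ℝ) ((0:ℕ)+1) := by
          intro s hs
          refine ⟨by simpa using hs.1, ?_⟩
          push_cast
          simpa using (hs.2.le : s ≤ 1)
        exact Filter.mem_of_superset (inter_mem_nhdsWithin _ (Iio_mem_nhds one_pos)) hsub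
      · obtain ⟨m, hm⟩ : ∃ m, k = m + 1 := ⟨k-1, by omega⟩
        have hcwa₁ : ContinuousWithinAt γ (Set.Icc (m:ℝ) (m+1)) t₀ := by
          apply hpiece m
          constructor
          · rw [← heq, hm]; push_cast; linarith
          · rw [← heq, hm]; push_cast; linarith
        have hcwa₂ : ContinuousWithinAt γ (Set.Icc (k:ℝ) (k+1)) t₀ :=
          hpiece k t₀ ⟨hkle, hklt.le⟩
        apply (hcwa₁.union hcwa₂).mono_of_mem_nhdsWithin
        have hmem : Set.Ioo ((m:ℝ)) ((k:ℝ)+1) ∈ 𝓝[Set.Ici 0] t₀ := by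
          apply nhdsWithin_le_nhds
          apply Ioo_mem_nhds
          · rw [← heq, hm]; push_cast; linarith
          · exact hklt
        apply Filter.mem_of_superset hmem
        intro s hs
        by_cases hsk : s ≤ (k:ℝ)
        · left
          refine ⟨hs.1.le, ?_⟩
          rw [hm] at hsk; push_cast at hsk ⊢; linarith
        · right
          exact ⟨le_of_not_ge hsk, hs.2.le⟩
    · apply (hpiece k t₀ ⟨hkle, hklt.le⟩).mono_of_mem_nhdsWithin
      apply Filter.mem_of_superset (nhdsWithin_le_nhds (Ioo_mem_nhds hlt hklt))
      exact Set.Ioo_subset_Icc_self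
  have hmemT : ∀ t : ℝ, c + ⌊t⌋₊ - 1 ≤ ‖γ t‖ ∧ ‖f (γ t)‖ ≤ M₁ := fun t => hpmem ⌊t⌋₊ _
  refine ⟨γ, hcont, ?_, fun t => (hmemT t).2⟩
  rw [← tendsto_norm_atTop_iff_cobounded]
  apply Filter.tendsto_atTop.2
  intro b
  filter_upwards [Filter.eventually_ge_atTop (b - c + 2)] with t ht
  have h1 : t - 1 < (⌊t⌋₊ : ℝ) := by linarith [Nat.lt_floor_add_one t]
  linarith [(hmemT t).1]


lemma exists_escape_curve (hf : Differentiable ℂ f) (hE : IsPreconnected E) {z₀ : ℂ}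
    (hz₀ : z₀ ∈ E) (hEub : ¬ IsBounded E) {M₀ : ℝ} (hM : ∀ w ∈ E, ‖f w‖ ≤ M₀) :
    ∃ γ : ℝ → ℂ, ContinuousOn γ (Set.Ici 0) ∧ Tendsto γ atTop (Bornology.cobounded ℂ) ∧
      ∀ t : ℝ, ‖f (γ t)‖ ≤ M₀ + 1 := by
  obtain ⟨x, hx⟩ := exists_chain hf hE hz₀ hEub hM
  exact curve_assembly (c := ‖z₀‖ + 1) (M₁ := M₀ + 1) hx

end Stmt10Aux

/-- If every unbounded curve has unbounded image under the
transcendental entire function `f`, then every component of the preimage of a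
bounded simply connected domain is bounded. -/
theorem stmt10 (f : ℂ → ℂ) (hf : TranscEntire f)
    (hcurve : ∀ γ : ℝ → ℂ, ContinuousOn γ (Set.Ici 0) → Tendsto γ atTop (Bornology.cobounded ℂ) → ¬ Bornology.IsBounded (f '' (γ '' Set.Ici 0)))
    (B : Set ℂ) (hBo : IsOpen B) (hBb : Bornology.IsBounded B)
    (hBsc : SimplyConnectedSpace ↥B) :
    ∀ z ∈ f ⁻¹' B, Bornology.IsBounded (connectedComponentIn (f ⁻¹' B) z) := by
  intro z hz
  by_contra hub
  set E := connectedComponentIn (f ⁻¹' B) z with hE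
  have hEpre : IsPreconnected E := isPreconnected_connectedComponentIn
  have hzE : z ∈ E := mem_connectedComponentIn hz
  obtain ⟨M₀, hM₀⟩ := hBb.subset_closedBall 0
  have hM : ∀ w ∈ E, ‖f w‖ ≤ M₀ := by
    intro w hw
    have hwB : f w ∈ B := connectedComponentIn_subset (f ⁻¹' B) z hw
    have := hM₀ hwB
    rwa [Metric.mem_closedBall, dist_zero_right] at this
  obtain ⟨γ, hγc, hγt, hγb⟩ := Stmt10Aux.exists_escape_curve (E := E) hf.1 hEpre hzE hub hM
  refine hcurve γ hγc hγt ?_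
  apply (Metric.isBounded_closedBall (x := (0:ℂ)) (r := M₀ + 1)).subset
  rintro w ⟨w', ⟨t, _, rfl⟩, rfl⟩
  rw [Metric.mem_closedBall, dist_zero_right]
  exact hγb t
end
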